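/- arXiv:2507.02889 — 5 statements merged into one kernel-verified Lean document; each statement's English description precedes it below -/
import Mathlib

section
/- Let α > 0, β > 0, λ ∈ ℝ, and let s > 0 be a real number with |λ| < s^α. Then ∫₀^∞ e^{−st} · (∑_{k=0}^∞ k · λ^k · t^{αk+β−1} · (ln t − ψ(αk+β)) / Γ(αk+β)) dt = − λ · s^{α−β} · ln s / (s^α − λ)². (The integrand series is the term-by-term derivative with respect to α of t^{β−1} E_{α,β}(λ t^α).) -/
open Real MeasureTheory Set Filter

/-- The digamma function `ψ(x) = the logarithmic derivative of Γ`, i.e. the derivative of `log ∘ Γ`. -/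
noncomputable def digamma (x : ℝ) : ℝ := deriv (fun y : ℝ => Real.log (Real.Gamma y)) x

namespace MLaux

lemma integrable_pow_exp {s c : ℝ} (hs : 0 < s) (hc : 0 < c) :
    IntegrableOn (fun t : ℝ => t ^ (c - 1) * Real.exp (-(s * t))) (Set.Ioi 0) := by
  have h := integrableOn_rpow_mul_exp_neg_mul_rpow (p := 1) (s := c - 1) (b := s)
    (by linarith) zero_lt_one hs
  simpa [Real.rpow_one, neg_mul] using h

lemma abs_log_le {δ t : ℝ} (hδ : 0 < δ) (ht : 0 < t) :
    |Real.log t| ≤ (t ^ δ + t ^ (-δ)) / δ := by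
  have h1 : ∀ u : ℝ, 0 < u → Real.log u * δ ≤ u ^ δ := by
    intro u hu
    have h2 := Real.log_le_sub_one_of_pos (Real.rpow_pos_of_pos hu δ)
    have h3 : Real.log (u ^ δ) = δ * Real.log u := Real.log_rpow hu δ
    rw [h3] at h2
    nlinarith [Real.rpow_pos_of_pos hu δ]
  have ha := h1 t ht
  have hb := h1 t⁻¹ (by positivity)
  rw [Real.log_inv, Real.inv_rpow ht.le, ← Real.rpow_neg ht.le] at hb
  have hp1 : (0:ℝ) < t ^ δ := Real.rpow_pos_of_pos ht _
  have hp2 : (0:ℝ) < t ^ (-δ) := Real.rpow_pos_of_pos ht _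
  rw [le_div_iff₀ hδ]
  rcases abs_cases (Real.log t) with ⟨h, _⟩ | ⟨h, _⟩ <;> rw [h] <;> nlinarith

lemma rpow_mem_le {t c d x : ℝ} (ht : 0 < t) (hcx : c ≤ x) (hxd : x ≤ d) :
    t ^ x ≤ t ^ c + t ^ d := by
  have h1 : (0:ℝ) < t ^ c := Real.rpow_pos_of_pos ht _
  have h2 : (0:ℝ) < t ^ d := Real.rpow_pos_of_pos ht _
  rcases le_or_gt t 1 with h | h
  · have := Real.rpow_le_rpow_of_exponent_ge ht h hcx
    linarith
  · have := Real.rpow_le_rpow_of_exponent_le h.le hxd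
    linarith

lemma contOn_base {s c : ℝ} :
    AEStronglyMeasurable (fun t : ℝ => t ^ (c - 1) * Real.exp (-(s * t)))
      (volume.restrict (Set.Ioi 0)) := by
  apply ContinuousOn.aestronglyMeasurable _ measurableSet_Ioi
  intro t ht
  exact (((Real.continuousAt_rpow_const t (c-1) (Or.inl (ne_of_gt ht))).continuousWithinAt).mul
    ((Real.continuous_exp.comp (continuous_const.mul continuous_id).neg).continuousWithinAt))

lemma contOn_log {s c : ℝ} :
    AEStronglyMeasurable (fun t : ℝ => t ^ (c - 1) * Real.log t * Real.exp (-(s * t)))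
      (volume.restrict (Set.Ioi 0)) := by
  apply ContinuousOn.aestronglyMeasurable _ measurableSet_Ioi
  intro t ht
  exact ((((Real.continuousAt_rpow_const t (c-1) (Or.inl (ne_of_gt ht))).continuousWithinAt).mul
    ((Real.continuousAt_log (ne_of_gt ht)).continuousWithinAt)).mul
    ((Real.continuous_exp.comp (continuous_const.mul continuous_id).neg).continuousWithinAt))

lemma hasDerivAt_G {s : ℝ} (hs : 0 < s) {a : ℝ} (ha : 0 < a) :
    Integrable (fun t => t ^ (a - 1) * Real.log t * Real.exp (-(s * t)))
      (volume.restrict (Set.Ioi 0)) ∧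
    HasDerivAt (fun x : ℝ => ∫ t in Set.Ioi (0:ℝ), t ^ (x - 1) * Real.exp (-(s * t)))
      (∫ t in Set.Ioi (0:ℝ), t ^ (a - 1) * Real.log t * Real.exp (-(s * t))) a := by
  have h4 : (0:ℝ) < a/4 := by linarith
  refine hasDerivAt_integral_of_dominated_loc_of_deriv_le
    (μ := volume.restrict (Set.Ioi 0)) (𝕜 := ℝ)
    (F := fun (x : ℝ) (t : ℝ) => t ^ (x - 1) * Real.exp (-(s * t)))
    (F' := fun (x : ℝ) (t : ℝ) => t ^ (x - 1) * Real.log t * Real.exp (-(s * t)))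
    (x₀ := a)
    (bound := fun t =>
      ((t ^ (a/2 - 1) + t ^ (3*a/2 - 1)) * ((t ^ (a/4) + t ^ (-(a/4))) / (a/4))) *
        Real.exp (-(s * t)))
    (Metric.ball_mem_nhds a (by linarith : (0:ℝ) < a/2))
    (Filter.Eventually.of_forall fun x => contOn_base)
    (integrable_pow_exp hs ha) (contOn_log)
    ?_ ?_ ?_
  · -- bound
    filter_upwards [self_mem_ae_restrict measurableSet_Ioi] with t ht x hx
    have ht' : (0:ℝ) < t := ht
    rw [Metric.mem_ball, Real.dist_eq, abs_lt] at hx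
    have hle : t ^ (x - 1) ≤ t ^ (a/2 - 1) + t ^ (3*a/2 - 1) :=
      rpow_mem_le ht' (by cases hx; linarith) (by cases hx; linarith)
    have habs := abs_log_le h4 ht'
    have hep : (0:ℝ) < Real.exp (-(s * t)) := Real.exp_pos _
    rw [Real.norm_eq_abs, abs_mul, abs_mul, Real.abs_exp, Real.abs_rpow_of_nonneg ht'.le,
      abs_of_nonneg ht'.le]
    apply mul_le_mul_of_nonneg_right _ hep.le
    exact mul_le_mul hle habs (abs_nonneg _) (by positivity)
  · -- integrability of bound
    have e1 := (((integrable_pow_exp hs (show (0:ℝ) < 3*a/4 by linarith)).add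
        (integrable_pow_exp hs h4)).add
      ((integrable_pow_exp hs (show (0:ℝ) < 7*a/4 by linarith)).add
        (integrable_pow_exp hs (show (0:ℝ) < 5*a/4 by linarith)))).mul_const (1/(a/4))
    apply e1.congr
    filter_upwards [self_mem_ae_restrict measurableSet_Ioi] with t ht
    have ht' : (0:ℝ) < t := ht
    rw [show 3*a/4 - 1 = (a/2 - 1) + (a/4) by ring, show a/4 - 1 = (a/2 - 1) + (-(a/4)) by ring,
      show 7*a/4 - 1 = (3*a/2 - 1) + (a/4) by ring,
      show 5*a/4 - 1 = (3*a/2 - 1) + (-(a/4)) by ring]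
    simp only [Pi.add_apply]
    rw [Real.rpow_add ht', Real.rpow_add ht', Real.rpow_add ht', Real.rpow_add ht']
    field_simp
  · -- differentiability
    filter_upwards [self_mem_ae_restrict measurableSet_Ioi] with t ht x hx
    have ht' : (0:ℝ) < t := ht
    have h1 : HasDerivAt (fun x : ℝ => t ^ (x - 1)) (t ^ (x - 1) * Real.log t) x := by
      have h3 : HasDerivAt (fun x : ℝ => Real.log t * (x - 1)) (Real.log t) x := by
        simpa using ((hasDerivAt_id x).sub_const 1).const_mul (Real.log t)
      have h2 := h3.exp
      have hfun : (fun x : ℝ => t ^ (x - 1)) = fun x : ℝ => Real.exp (Real.log t * (x - 1)) := by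
        funext y; rw [Real.rpow_def_of_pos ht']
      rw [hfun, Real.rpow_def_of_pos ht']
      simpa [mul_comm] using h2
    exact h1.mul_const _

lemma Gamma_diffAt {a : ℝ} (ha : 0 < a) : DifferentiableAt ℝ Real.Gamma a :=
  Real.differentiableAt_Gamma fun m => by
    have : (0:ℝ) ≤ m := Nat.cast_nonneg m
    exact ne_of_gt (by linarith)

lemma integral_log_term {s : ℝ} (hs : 0 < s) {a : ℝ} (ha : 0 < a) :
    ∫ t in Set.Ioi (0:ℝ), t ^ (a - 1) * Real.log t * Real.exp (-(s * t))
      = (1/s) ^ a * (deriv Real.Gamma a - Real.Gamma a * Real.log s) := by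
  have hG := (hasDerivAt_G hs ha).2
  have heq : (fun x : ℝ => (1/s) ^ x * Real.Gamma x)
      =ᶠ[nhds a] (fun x : ℝ => ∫ t in Set.Ioi (0:ℝ), t ^ (x - 1) * Real.exp (-(s * t))) := by
    filter_upwards [eventually_gt_nhds ha] with x hx
    exact (Real.integral_rpow_mul_exp_neg_mul_Ioi hx hs).symm
  have hG' := hG.congr_of_eventuallyEq heq
  have h1 : HasDerivAt (fun x : ℝ => (1/s) ^ x) ((1/s) ^ a * Real.log (1/s)) a := by
    have hs' : (0:ℝ) < 1/s := by positivity
    have h3 : HasDerivAt (fun x : ℝ => Real.exp (Real.log (1/s) * x))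
        (Real.exp (Real.log (1/s) * a) * Real.log (1/s)) a := by
      simpa [mul_comm] using ((hasDerivAt_id a).const_mul (Real.log (1/s))).exp
    have hfun : (fun x : ℝ => (1/s) ^ x) = fun x : ℝ => Real.exp (Real.log (1/s) * x) := by
      funext y; rw [Real.rpow_def_of_pos hs']
    rw [hfun, Real.rpow_def_of_pos hs']
    exact h3
  have h2 := h1.mul ((Gamma_diffAt ha).hasDerivAt)
  have h5 := hG'.unique h2
  rw [h5, one_div, Real.log_inv]
  ring

lemma digamma_eq {a : ℝ} (ha : 0 < a) : digamma a = deriv Real.Gamma a / Real.Gamma a := by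
  unfold digamma
  rw [deriv.log (Gamma_diffAt ha) (Real.Gamma_pos_of_pos ha).ne']

lemma key_integrable {s : ℝ} (hs : 0 < s) {a : ℝ} (ha : 0 < a) (c d e : ℝ) :
    Integrable (fun t : ℝ => c * (t ^ (a - 1) * Real.log t * Real.exp (-(s * t)))
      + d * (t ^ (a - 1) * Real.exp (-(s * t)))) (volume.restrict (Set.Ioi 0)) :=
  (((hasDerivAt_G hs ha).1.const_mul c).add ((integrable_pow_exp hs ha).const_mul d))

lemma key_integral {s : ℝ} (hs : 0 < s) {a : ℝ} (ha : 0 < a) :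
    ∫ t in Set.Ioi (0:ℝ),
        Real.exp (-(s * t)) * (t ^ (a - 1) * (Real.log t - digamma a) / Real.Gamma a)
      = -((1/s) ^ a * Real.log s) := by
  have hΓ : Real.Gamma a ≠ 0 := (Real.Gamma_pos_of_pos ha).ne'
  have hfun : (fun t : ℝ =>
      Real.exp (-(s * t)) * (t ^ (a - 1) * (Real.log t - digamma a) / Real.Gamma a))
    = fun t : ℝ => (Real.Gamma a)⁻¹ * (t ^ (a - 1) * Real.log t * Real.exp (-(s * t)))
      + (-(digamma a) / Real.Gamma a) * (t ^ (a - 1) * Real.exp (-(s * t))) := by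
    funext t; field_simp; ring
  rw [hfun, integral_add (((hasDerivAt_G hs ha).1.const_mul _))
      ((integrable_pow_exp hs ha).const_mul _),
    MeasureTheory.integral_const_mul, MeasureTheory.integral_const_mul, integral_log_term hs ha,
    Real.integral_rpow_mul_exp_neg_mul_Ioi ha hs, digamma_eq ha]
  field_simp
  ring

lemma Gamma_ge_one {x : ℝ} (hx : 2 ≤ x) : 1 ≤ Real.Gamma x := by
  rcases eq_or_lt_of_le hx with h | h
  · rw [← h, Real.Gamma_two]
  · have hc := Real.convexOn_Gamma
    have hne : x - 1 ≠ 0 := by intro h0; linarith [h]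
    have hb : (0:ℝ) < 1/(x-1) := div_pos one_pos (by linarith)
    have ha' : (0:ℝ) ≤ (x-2)/(x-1) := div_nonneg (by linarith) (by linarith)
    have hsum : (x-2)/(x-1) + 1/(x-1) = 1 := by field_simp; linarith
    have hkey := hc.2 (Set.mem_Ioi.mpr one_pos)
      (Set.mem_Ioi.mpr (show (0:ℝ) < x by linarith)) ha' hb.le hsum
    have hcomb : ((x-2)/(x-1)) • (1:ℝ) + (1/(x-1)) • x = 2 := by
      simp only [smul_eq_mul, mul_one]
      field_simp
      ring
    rw [hcomb, Real.Gamma_two, Real.Gamma_one] at hkey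
    simp only [smul_eq_mul, mul_one] at hkey
    nlinarith

lemma Gamma_lower (c : ℝ) (hc : 0 < c) : ∃ m : ℝ, 0 < m ∧ ∀ x, c ≤ x → m ≤ Real.Gamma x := by
  have hne : (Set.Icc (min c 2) 2).Nonempty := Set.nonempty_Icc.mpr (min_le_right _ _)
  have hcont : ContinuousOn Real.Gamma (Set.Icc (min c 2) 2) := by
    intro x hx
    have hx0 : 0 < x := lt_of_lt_of_le (lt_min hc two_pos) hx.1
    exact (Gamma_diffAt hx0).continuousAt.continuousWithinAt
  obtain ⟨x₀, hx₀mem, hx₀⟩ := (isCompact_Icc).exists_isMinOn hne hcont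
  have hx₀0 : 0 < x₀ := lt_of_lt_of_le (lt_min hc two_pos) hx₀mem.1
  refine ⟨min (Real.Gamma x₀) 1, by positivity, fun x hx => ?_⟩
  rcases le_or_gt x 2 with h | h
  · have hmem : x ∈ Set.Icc (min c 2) 2 := ⟨le_trans (min_le_left _ _) hx, h⟩
    exact le_trans (min_le_left _ _) (hx₀ hmem)
  · exact le_trans (min_le_right _ _) (Gamma_ge_one h.le)

lemma Gamma_ratio_up {a δ : ℝ} (ha : 0 < a) (hδ0 : 0 ≤ δ) (hδ1 : δ ≤ 1) :
    Real.Gamma (a + δ) ≤ (1 + a) * Real.Gamma a := by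
  have hseg : a + δ ∈ segment ℝ a (a + 1) := by
    rw [segment_eq_Icc (by linarith)]
    constructor <;> [linarith; linarith]
  have h := Real.convexOn_Gamma.le_on_segment (by simpa using ha)
    (by simp; linarith) hseg
  have hΓ : 0 < Real.Gamma a := Real.Gamma_pos_of_pos ha
  rw [Real.Gamma_add_one ha.ne'] at h
  rcases max_cases (Real.Gamma a) (a * Real.Gamma a) with ⟨he, _⟩ | ⟨he, _⟩ <;>
    rw [he] at h <;> nlinarith

lemma Gamma_ratio_down {a b δ : ℝ} (hbδ : 0 < b - δ) (hδ : 0 ≤ δ) (hab : b ≤ a) :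
    Real.Gamma (a - δ) ≤ Real.Gamma (b - δ) + Real.Gamma a := by
  have hb0 : 0 < b := by linarith
  have ha0 : 0 < a := by linarith
  have hseg : a - δ ∈ segment ℝ (b - δ) a := by
    rw [segment_eq_Icc (by linarith)]
    constructor <;> linarith
  have h := Real.convexOn_Gamma.le_on_segment (by simpa using hbδ)
    (by simpa using ha0) hseg
  have h1 : 0 < Real.Gamma (b - δ) := Real.Gamma_pos_of_pos hbδ
  have h2 : 0 < Real.Gamma a := Real.Gamma_pos_of_pos ha0
  rcases max_cases (Real.Gamma (b - δ)) (Real.Gamma a) with ⟨he, _⟩ | ⟨he, _⟩ <;>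
    rw [he] at h <;> linarith

lemma digamma_le {a : ℝ} (ha : 0 < a) : digamma a ≤ Real.log a := by
  have hd : DifferentiableAt ℝ (Real.log ∘ Real.Gamma) a :=
    (Gamma_diffAt ha).log (Real.Gamma_pos_of_pos ha).ne'
  have h := Real.convexOn_log_Gamma.deriv_le_slope (x := a) (y := a + 1)
    (Set.mem_Ioi.mpr ha) (Set.mem_Ioi.mpr (by linarith)) (by linarith) hd
  have hψ : digamma a = deriv (Real.log ∘ Real.Gamma) a := by
    unfold digamma; rfl
  rw [slope_def_field] at h
  have hcomp : (Real.log ∘ Real.Gamma) (a + 1) - (Real.log ∘ Real.Gamma) a = Real.log a := by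
    simp only [Function.comp_apply]
    rw [Real.Gamma_add_one ha.ne',
      Real.log_mul ha.ne' (Real.Gamma_pos_of_pos ha).ne']
    ring
  rw [hψ]
  refine le_trans h (le_of_eq ?_)
  rw [hcomp]
  norm_num

lemma digamma_bound (β : ℝ) (hβ : 0 < β) :
    ∃ C : ℝ, 0 ≤ C ∧ ∀ a, β ≤ a → |digamma a| ≤ C + a := by
  obtain ⟨m, hm, hmle⟩ := Gamma_lower (β/2) (by positivity)
  set M : ℝ := Real.log (Real.Gamma (β/2)) - Real.log m with hMdef
  refine ⟨max 0 (M / (β/2)), le_max_left _ _, fun a hba => ?_⟩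
  have ha : 0 < a := lt_of_lt_of_le hβ hba
  have hup : digamma a ≤ Real.log a := digamma_le ha
  have hlog : Real.log a ≤ a := by
    have := Real.log_le_sub_one_of_pos ha; linarith
  have hd : DifferentiableAt ℝ (Real.log ∘ Real.Gamma) a :=
    (Gamma_diffAt ha).log (Real.Gamma_pos_of_pos ha).ne'
  have hβ2a : β/2 < a := by linarith
  have h := Real.convexOn_log_Gamma.slope_le_deriv (x := β/2) (y := a)
    (Set.mem_Ioi.mpr (by positivity)) (Set.mem_Ioi.mpr ha) hβ2a hd
  rw [slope_def_field] at h
  have hψ : digamma a = deriv (Real.log ∘ Real.Gamma) a := by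
    unfold digamma; rfl
  have hfa : Real.log m ≤ Real.log (Real.Gamma a) :=
    Real.log_le_log hm (hmle a (by linarith))
  have hden : 0 < a - β/2 := by linarith
  have hN : -M ≤ (Real.log ∘ Real.Gamma) a - (Real.log ∘ Real.Gamma) (β/2) := by
    simp only [Function.comp_apply]; rw [hMdef]; linarith
  have hslope : -(max 0 (M / (β/2))) ≤
      ((Real.log ∘ Real.Gamma) a - (Real.log ∘ Real.Gamma) (β/2)) / (a - β/2) := by
    set N := (Real.log ∘ Real.Gamma) a - (Real.log ∘ Real.Gamma) (β/2) with hNdef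
    rcases le_or_gt 0 N with hN0 | hN0
    · have h1 : 0 ≤ N / (a - β/2) := div_nonneg hN0 hden.le
      have h0 : -(max 0 (M / (β/2))) ≤ 0 := by
        simp only [neg_nonpos]; exact le_max_left _ _
      linarith
    · have hd2 : β/2 ≤ a - β/2 := by linarith
      have hβ2 : (0:ℝ) < β/2 := by positivity
      have s1 : N / (β/2) ≤ N / (a - β/2) := by
        rw [div_le_div_iff₀ hβ2 hden]
        nlinarith [mul_nonneg (neg_nonneg.mpr hN0.le) (sub_nonneg.mpr hd2)]
      have s2 : -M / (β/2) ≤ N / (β/2) := by gcongr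
      have s3 : -(max 0 (M / (β/2))) ≤ -M / (β/2) := by
        rw [neg_div, neg_le_neg_iff]
        exact le_max_right _ _
      linarith
  have hlow : -(max 0 (M / (β/2))) ≤ digamma a := by
    rw [hψ]; exact le_trans hslope h
  rw [abs_le]
  refine ⟨by linarith, ?_⟩
  have := le_max_left (0:ℝ) (M / (β/2))
  linarith

end MLaux

set_option maxHeartbeats 2000000 in
open MLaux in
theorem laplace_deriv_alpha_ML (α β lam s : ℝ) (hα : 0 < α) (hβ : 0 < β) (hs : 0 < s)
    (hlam : |lam| < s ^ α) :
    (∫ t in Set.Ioi (0 : ℝ), Real.exp (-(s * t)) *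
        ∑' k : ℕ, (k : ℝ) * lam ^ k * t ^ (α * k + β - 1) *
          (Real.log t - digamma (α * k + β)) / Real.Gamma (α * k + β))
      = -(lam * s ^ (α - β) * Real.log s / (s ^ α - lam) ^ 2) := by
  have hs1 : (0:ℝ) < 1/s := by positivity
  have hsa : (0:ℝ) < s ^ α := Real.rpow_pos_of_pos hs α
  set δ : ℝ := min β 1 / 2 with hδdef
  have hδ0 : 0 < δ := by positivity
  have hδβ : δ ≤ β/2 := by
    rw [hδdef]; have := min_le_left β 1; linarith
  have hδ1 : δ ≤ 1 := by
    rw [hδdef]; have := min_le_right β 1; linarith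
  have hβδ : 0 < β - δ := by linarith
  set r : ℝ := (1/s) ^ α with hrdef
  have hr0 : 0 < r := Real.rpow_pos_of_pos hs1 α
  set x : ℝ := |lam| * r with hxdef
  have hrinv : r = (s ^ α)⁻¹ := by
    rw [hrdef, one_div, ← Real.rpow_neg_one s, ← Real.rpow_mul hs.le,
      show (-1 : ℝ) * α = -α by ring, Real.rpow_neg hs.le]
  have hx0 : 0 ≤ x := by positivity
  have hx1 : x < 1 := by
    rw [hxdef, hrinv, ← div_eq_mul_inv, div_lt_one hsa]
    exact hlam
  have hxnorm : ‖x‖ < 1 := by rwa [Real.norm_eq_abs, abs_of_nonneg hx0]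
  have hak : ∀ k : ℕ, (0:ℝ) < α * k + β := fun k =>
    add_pos_of_nonneg_of_pos (mul_nonneg hα.le (Nat.cast_nonneg k)) hβ
  have hakβ : ∀ k : ℕ, β ≤ α * k + β := fun k => by
    have : (0:ℝ) ≤ α * k := mul_nonneg hα.le (Nat.cast_nonneg k)
    linarith
  obtain ⟨m, hm0, hmle⟩ := Gamma_lower β hβ
  obtain ⟨C, hC0, hCψ⟩ := digamma_bound β hβ
  set g : ℕ → ℝ → ℝ := fun k t => Real.exp (-(s * t)) *
    ((k : ℝ) * lam ^ k * t ^ (α * k + β - 1) *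
      (Real.log t - digamma (α * k + β)) / Real.Gamma (α * k + β)) with hgdef
  have hsplit : ∀ c : ℝ, ∀ k : ℕ, (1/s) ^ (α * k + c) = r ^ k * (1/s) ^ c := by
    intro c k
    rw [Real.rpow_add hs1, hrdef, ← Real.rpow_natCast ((1/s) ^ α) k,
      ← Real.rpow_mul hs1.le]
  have hxpow : ∀ k : ℕ, |lam| ^ k * r ^ k = x ^ k := fun k => (mul_pow _ _ _).symm
  have hinner : ∀ k : ℕ, Integrable
      (fun t : ℝ => Real.exp (-(s * t)) * (t ^ (α * k + β - 1) *
        (Real.log t - digamma (α * k + β)) / Real.Gamma (α * k + β)))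
      (volume.restrict (Set.Ioi 0)) := by
    intro k
    have hΓ : (0:ℝ) < Real.Gamma (α * k + β) := Real.Gamma_pos_of_pos (hak k)
    have h := key_integrable hs (hak k) (Real.Gamma (α * k + β))⁻¹
      (-(digamma (α * k + β)) / Real.Gamma (α * k + β)) 0
    apply h.congr
    filter_upwards with t
    field_simp
    ring
  have hgint : ∀ k : ℕ, Integrable (g k) (volume.restrict (Set.Ioi 0)) := by
    intro k
    have h := (hinner k).const_mul ((k : ℝ) * lam ^ k)
    apply h.congr
    filter_upwards with t
    rw [hgdef]
    ring
  have hgval : ∀ k : ℕ, ∫ t in Set.Ioi (0:ℝ), g k t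
      = (k : ℝ) * lam ^ k * (-((1/s) ^ (α * k + β) * Real.log s)) := by
    intro k
    have h1 : ∫ t in Set.Ioi (0:ℝ), g k t = ∫ t in Set.Ioi (0:ℝ),
        ((k : ℝ) * lam ^ k) * (Real.exp (-(s * t)) * (t ^ (α * k + β - 1) *
          (Real.log t - digamma (α * k + β)) / Real.Gamma (α * k + β))) := by
      apply setIntegral_congr_fun measurableSet_Ioi
      intro t _
      rw [hgdef]; ring
    rw [h1, MeasureTheory.integral_const_mul, key_integral hs (hak k)]
  set b1 : ℝ := (1/δ) * (1/s) ^ (β+δ) * (1+α+β) with hb1def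
  set b2 : ℝ := (1/δ) * (1/s) ^ (β-δ) * (Real.Gamma (β-δ)/m + 1) with hb2def
  set b3 : ℝ := (1/s) ^ β * (C+α+β) with hb3def
  set B : ℝ := b1 + b2 + b3 with hBdef
  set W : ℕ → ℝ := fun k => B * ((k:ℝ) * x ^ k + (k:ℝ)^2 * x ^ k) with hWdef
  have hnormle : ∀ k : ℕ, (∫ t in Set.Ioi (0:ℝ), ‖g k t‖) ≤ W k := by
    intro k
    set A : ℝ := α * k + β with hAdef
    have hA0 : 0 < A := hak k
    have hAβ : β ≤ A := hakβ k
    have hΓ : 0 < Real.Gamma A := Real.Gamma_pos_of_pos hA0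
    have hΓm : m ≤ Real.Gamma A := hmle A hAβ
    have hAle : A ≤ (α+β) * ((k:ℝ)+1) := by
      rw [hAdef]
      have h1 : (0:ℝ) ≤ β * k := mul_nonneg hβ.le (Nat.cast_nonneg k)
      nlinarith
    set ck : ℝ := (k:ℝ) * |lam| ^ k / Real.Gamma A with hckdef
    have hck0 : 0 ≤ ck := by positivity
    set h : ℝ → ℝ := fun t => ck *
      ((1/δ) * (t ^ (A + δ - 1) * Real.exp (-(s * t)))
        + (1/δ) * (t ^ (A - δ - 1) * Real.exp (-(s * t)))
        + |digamma A| * (t ^ (A - 1) * Real.exp (-(s * t)))) with hhdef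
    have hint : Integrable h (volume.restrict (Set.Ioi 0)) := by
      apply Integrable.const_mul
      exact (((integrable_pow_exp hs (by linarith : (0:ℝ) < A + δ)).const_mul (1/δ)).add
        ((integrable_pow_exp hs (by linarith : (0:ℝ) < A - δ)).const_mul (1/δ))).add
        ((integrable_pow_exp hs hA0).const_mul _)
    have hpb : ∀ᵐ t ∂(volume.restrict (Set.Ioi (0:ℝ))), ‖g k t‖ ≤ h t := by
      filter_upwards [self_mem_ae_restrict measurableSet_Ioi] with t ht
      have ht' : (0:ℝ) < t := ht
      have habs : ‖g k t‖ = ck * ((t ^ (A - 1) * |Real.log t - digamma A|)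
          * Real.exp (-(s * t))) := by
        simp only [hgdef, hckdef]
        rw [Real.norm_eq_abs, abs_mul, Real.abs_exp, abs_div, abs_mul,
          abs_mul, abs_mul, Nat.abs_cast, abs_pow,
          abs_of_nonneg (Real.rpow_nonneg ht'.le _), abs_of_pos hΓ]
        ring
      have hcore : t ^ (A - 1) * |Real.log t - digamma A|
          ≤ (1/δ) * t ^ (A + δ - 1) + (1/δ) * t ^ (A - δ - 1)
            + |digamma A| * t ^ (A - 1) := by
        have h1 : |Real.log t - digamma A| ≤ |Real.log t| + |digamma A| :=
          abs_sub _ _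
        have h2 : t ^ (A - 1) * |Real.log t|
            ≤ (1/δ) * t ^ (A + δ - 1) + (1/δ) * t ^ (A - δ - 1) := by
          calc t ^ (A - 1) * |Real.log t|
              ≤ t ^ (A - 1) * ((t ^ δ + t ^ (-δ)) / δ) :=
                mul_le_mul_of_nonneg_left (abs_log_le hδ0 ht')
                  (Real.rpow_nonneg ht'.le _)
            _ = (1/δ) * t ^ (A + δ - 1) + (1/δ) * t ^ (A - δ - 1) := by
                rw [show A + δ - 1 = (A - 1) + δ by ring,
                  show A - δ - 1 = (A - 1) + (-δ) by ring,
                  Real.rpow_add ht', Real.rpow_add ht']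
                ring
        have h3 : (0:ℝ) ≤ t ^ (A - 1) := Real.rpow_nonneg ht'.le _
        nlinarith [mul_le_mul_of_nonneg_left h1 h3]
      rw [habs]
      simp only [hhdef]
      have hexp : (0:ℝ) < Real.exp (-(s * t)) := Real.exp_pos _
      apply mul_le_mul_of_nonneg_left _ hck0
      calc t ^ (A - 1) * |Real.log t - digamma A| * Real.exp (-(s * t))
          ≤ ((1/δ) * t ^ (A + δ - 1) + (1/δ) * t ^ (A - δ - 1)
              + |digamma A| * t ^ (A - 1)) * Real.exp (-(s * t)) :=
            mul_le_mul_of_nonneg_right hcore hexp.le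
        _ = (1/δ) * (t ^ (A + δ - 1) * Real.exp (-(s * t)))
            + (1/δ) * (t ^ (A - δ - 1) * Real.exp (-(s * t)))
            + |digamma A| * (t ^ (A - 1) * Real.exp (-(s * t))) := by ring
    have hmono : (∫ t in Set.Ioi (0:ℝ), ‖g k t‖) ≤ ∫ t in Set.Ioi (0:ℝ), h t :=
      integral_mono_of_nonneg (Filter.Eventually.of_forall fun t => norm_nonneg _)
        hint hpb
    have hval : ∫ t in Set.Ioi (0:ℝ), h t
        = ck * ((1/δ) * ((1/s) ^ (A+δ) * Real.Gamma (A+δ))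
            + (1/δ) * ((1/s) ^ (A-δ) * Real.Gamma (A-δ))
            + |digamma A| * ((1/s) ^ A * Real.Gamma A)) := by
      have i1 : Integrable (fun t : ℝ => (1/δ) * (t ^ (A + δ - 1) * Real.exp (-(s * t))))
          (volume.restrict (Set.Ioi 0)) :=
        (integrable_pow_exp hs (by linarith : (0:ℝ) < A + δ)).const_mul (1/δ)
      have i2 : Integrable (fun t : ℝ => (1/δ) * (t ^ (A - δ - 1) * Real.exp (-(s * t))))
          (volume.restrict (Set.Ioi 0)) :=
        (integrable_pow_exp hs (by linarith : (0:ℝ) < A - δ)).const_mul (1/δ)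
      have i3 : Integrable (fun t : ℝ => |digamma A| * (t ^ (A - 1) * Real.exp (-(s * t))))
          (volume.restrict (Set.Ioi 0)) :=
        (integrable_pow_exp hs hA0).const_mul _
      have i12 : Integrable (fun t : ℝ => (1/δ) * (t ^ (A + δ - 1) * Real.exp (-(s * t)))
          + (1/δ) * (t ^ (A - δ - 1) * Real.exp (-(s * t)))) (volume.restrict (Set.Ioi 0)) :=
        i1.add i2
      simp only [hhdef]
      rw [MeasureTheory.integral_const_mul]
      congr 1
      rw [integral_add i12 i3, integral_add i1 i2,
        MeasureTheory.integral_const_mul, MeasureTheory.integral_const_mul,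
        MeasureTheory.integral_const_mul,
        Real.integral_rpow_mul_exp_neg_mul_Ioi (show (0:ℝ) < A + δ by linarith) hs,
        Real.integral_rpow_mul_exp_neg_mul_Ioi (show (0:ℝ) < A - δ by linarith) hs,
        Real.integral_rpow_mul_exp_neg_mul_Ioi hA0 hs]
    have hsplitp : (1/s) ^ (A + δ) = r ^ k * (1/s) ^ (β + δ) := by
      rw [hAdef, show α * (k:ℝ) + β + δ = α * (k:ℝ) + (β + δ) by ring, hsplit]
    have hsplitm : (1/s) ^ (A - δ) = r ^ k * (1/s) ^ (β - δ) := by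
      rw [hAdef, show α * (k:ℝ) + β - δ = α * (k:ℝ) + (β - δ) by ring, hsplit]
    have hsplit0 : (1/s) ^ A = r ^ k * (1/s) ^ β := by
      rw [hAdef, hsplit]
    have hk0 : (0:ℝ) ≤ (k:ℝ) := Nat.cast_nonneg k
    have hxk : (0:ℝ) ≤ x ^ k := pow_nonneg hx0 k
    have hlamk : (0:ℝ) ≤ |lam| ^ k := pow_nonneg (abs_nonneg _) k
    have hrk : (0:ℝ) < r ^ k := pow_pos hr0 k
    have hsβδ1 : (0:ℝ) < (1/s) ^ (β+δ) := Real.rpow_pos_of_pos hs1 _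
    have hsβδ2 : (0:ℝ) < (1/s) ^ (β-δ) := Real.rpow_pos_of_pos hs1 _
    have hsβ : (0:ℝ) < (1/s) ^ β := Real.rpow_pos_of_pos hs1 _
    have hT1 : ck * ((1/δ) * ((1/s) ^ (A+δ) * Real.Gamma (A+δ)))
        ≤ b1 * ((k:ℝ) * x ^ k + (k:ℝ)^2 * x ^ k) := by
      have hGup : Real.Gamma (A+δ) ≤ ((1+α+β) * ((k:ℝ)+1)) * Real.Gamma A := by
        calc Real.Gamma (A+δ) ≤ (1+A) * Real.Gamma A :=
            Gamma_ratio_up hA0 hδ0.le hδ1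
          _ ≤ ((1+α+β) * ((k:ℝ)+1)) * Real.Gamma A := by
            apply mul_le_mul_of_nonneg_right _ hΓ.le
            nlinarith
      calc ck * ((1/δ) * ((1/s) ^ (A+δ) * Real.Gamma (A+δ)))
          = (k:ℝ) * |lam| ^ k * (1/δ) * (r ^ k * (1/s) ^ (β+δ))
              * (Real.Gamma (A+δ) / Real.Gamma A) := by
            rw [hsplitp, hckdef]; field_simp
        _ ≤ (k:ℝ) * |lam| ^ k * (1/δ) * (r ^ k * (1/s) ^ (β+δ))
              * ((1+α+β) * ((k:ℝ)+1)) := by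
            apply mul_le_mul_of_nonneg_left _
              (mul_nonneg (mul_nonneg (mul_nonneg hk0 hlamk) (by positivity))
                (mul_nonneg hrk.le hsβδ1.le))
            rw [div_le_iff₀ hΓ]
            exact hGup
        _ = b1 * ((k:ℝ) * x ^ k + (k:ℝ)^2 * x ^ k) := by
            rw [hb1def, ← hxpow k]; ring
    have hT2 : ck * ((1/δ) * ((1/s) ^ (A-δ) * Real.Gamma (A-δ)))
        ≤ b2 * ((k:ℝ) * x ^ k + (k:ℝ)^2 * x ^ k) := by
      have hGdn : Real.Gamma (A-δ) ≤ (Real.Gamma (β-δ)/m + 1) * Real.Gamma A := by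
        have h1 : Real.Gamma (A-δ) ≤ Real.Gamma (β-δ) + Real.Gamma A :=
          Gamma_ratio_down hβδ hδ0.le hAβ
        have h2 : Real.Gamma (β-δ) ≤ Real.Gamma (β-δ)/m * Real.Gamma A := by
          rw [div_mul_eq_mul_div, le_div_iff₀ hm0]
          exact mul_le_mul_of_nonneg_left hΓm (Real.Gamma_pos_of_pos hβδ).le
        nlinarith
      calc ck * ((1/δ) * ((1/s) ^ (A-δ) * Real.Gamma (A-δ)))
          = (k:ℝ) * |lam| ^ k * (1/δ) * (r ^ k * (1/s) ^ (β-δ))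
              * (Real.Gamma (A-δ) / Real.Gamma A) := by
            rw [hsplitm, hckdef]; field_simp
        _ ≤ (k:ℝ) * |lam| ^ k * (1/δ) * (r ^ k * (1/s) ^ (β-δ))
              * (Real.Gamma (β-δ)/m + 1) := by
            apply mul_le_mul_of_nonneg_left _
              (mul_nonneg (mul_nonneg (mul_nonneg hk0 hlamk) (by positivity))
                (mul_nonneg hrk.le hsβδ2.le))
            rw [div_le_iff₀ hΓ]
            exact hGdn
        _ ≤ b2 * ((k:ℝ) * x ^ k + (k:ℝ)^2 * x ^ k) := by
            rw [hb2def, ← hxpow k]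
            have hgm : (0:ℝ) ≤ Real.Gamma (β-δ)/m + 1 := by
              have := Real.Gamma_pos_of_pos hβδ
              positivity
            nlinarith [mul_nonneg (mul_nonneg (mul_nonneg hk0 hk0) (mul_nonneg hlamk hrk.le))
              (mul_nonneg (mul_nonneg (by positivity : (0:ℝ) ≤ 1/δ) hsβδ2.le) hgm)]
    have hT3 : ck * (|digamma A| * ((1/s) ^ A * Real.Gamma A))
        ≤ b3 * ((k:ℝ) * x ^ k + (k:ℝ)^2 * x ^ k) := by
      have hψ : |digamma A| ≤ C + (α+β) * ((k:ℝ)+1) := by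
        have := hCψ A hAβ
        linarith
      calc ck * (|digamma A| * ((1/s) ^ A * Real.Gamma A))
          = (k:ℝ) * |lam| ^ k * (r ^ k * (1/s) ^ β) * |digamma A| := by
            rw [hsplit0, hckdef]; field_simp
        _ ≤ (k:ℝ) * |lam| ^ k * (r ^ k * (1/s) ^ β) * (C + (α+β) * ((k:ℝ)+1)) := by
            apply mul_le_mul_of_nonneg_left hψ
              (mul_nonneg (mul_nonneg hk0 hlamk) (mul_nonneg hrk.le hsβ.le))
        _ ≤ b3 * ((k:ℝ) * x ^ k + (k:ℝ)^2 * x ^ k) := by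
            rw [hb3def, ← hxpow k]
            nlinarith [mul_nonneg (mul_nonneg (mul_nonneg hC0 (mul_nonneg hk0 hk0))
              (mul_nonneg hlamk hrk.le)) hsβ.le]
    calc (∫ t in Set.Ioi (0:ℝ), ‖g k t‖) ≤ ∫ t in Set.Ioi (0:ℝ), h t := hmono
      _ = ck * ((1/δ) * ((1/s) ^ (A+δ) * Real.Gamma (A+δ))
            + (1/δ) * ((1/s) ^ (A-δ) * Real.Gamma (A-δ))
            + |digamma A| * ((1/s) ^ A * Real.Gamma A)) := hval
      _ = ck * ((1/δ) * ((1/s) ^ (A+δ) * Real.Gamma (A+δ)))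
          + ck * ((1/δ) * ((1/s) ^ (A-δ) * Real.Gamma (A-δ)))
          + ck * (|digamma A| * ((1/s) ^ A * Real.Gamma A)) := by ring
      _ ≤ b1 * ((k:ℝ) * x ^ k + (k:ℝ)^2 * x ^ k)
          + b2 * ((k:ℝ) * x ^ k + (k:ℝ)^2 * x ^ k)
          + b3 * ((k:ℝ) * x ^ k + (k:ℝ)^2 * x ^ k) := by linarith
      _ = W k := by rw [hWdef, hBdef]; ring
  have hWsum : Summable W := by
    have s1 : Summable (fun k : ℕ => (k:ℝ) * x ^ k) := by
      have := summable_pow_mul_geometric_of_norm_lt_one (R := ℝ) 1 hxnorm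
      simpa [pow_one] using this
    have s2 : Summable (fun k : ℕ => (k:ℝ)^2 * x ^ k) :=
      summable_pow_mul_geometric_of_norm_lt_one 2 hxnorm
    exact (s1.add s2).mul_left B
  have hgsum : Summable (fun k : ℕ => ∫ t in Set.Ioi (0:ℝ), ‖g k t‖) :=
    Summable.of_nonneg_of_le
      (fun k => integral_nonneg fun t => norm_nonneg _) hnormle hWsum
  have hswap := integral_tsum_of_summable_integral_norm hgint hgsum
  have hstep : (∫ t in Set.Ioi (0 : ℝ), Real.exp (-(s * t)) *
        ∑' k : ℕ, (k : ℝ) * lam ^ k * t ^ (α * k + β - 1) *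
          (Real.log t - digamma (α * k + β)) / Real.Gamma (α * k + β))
      = ∫ t in Set.Ioi (0 : ℝ), ∑' k : ℕ, g k t := by
    apply setIntegral_congr_fun measurableSet_Ioi
    intro t _
    rw [hgdef]
    exact (tsum_mul_left).symm
  rw [hstep, ← hswap]
  have hterm : ∀ k : ℕ, (∫ t in Set.Ioi (0:ℝ), g k t)
      = (-(Real.log s) * (1/s) ^ β) * ((k:ℝ) * (lam * r) ^ k) := by
    intro k
    rw [hgval k, hsplit β k, mul_pow]
    ring
  rw [tsum_congr hterm, tsum_mul_left]
  have hw : ‖lam * r‖ < 1 := by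
    rw [Real.norm_eq_abs, abs_mul, abs_of_pos hr0]
    exact hx1
  rw [tsum_coe_mul_geometric_of_norm_lt_one hw]
  have hsβ : (0:ℝ) < s ^ β := Real.rpow_pos_of_pos hs β
  have hdiff : 0 < s ^ α - lam := by
    have h1 := le_abs_self lam
    linarith
  have h1w : 1 - lam * r = (s ^ α - lam) / s ^ α := by
    rw [hrinv]
    field_simp
  have hsab : s ^ (α - β) = s ^ α / s ^ β := Real.rpow_sub hs α β
  have hsβinv : (1/s) ^ β = (s ^ β)⁻¹ := by
    rw [one_div, ← Real.rpow_neg_one s, ← Real.rpow_mul hs.le,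
      show (-1:ℝ) * β = -β by ring, Real.rpow_neg hs.le]
  rw [h1w, hrinv, hsab, hsβinv, div_pow]
  field_simp
end

section
/- Let α > 0, β > 0, λ ∈ ℝ, and let s > 0 be a real number with |λ| < s^α. Then ∫₀^∞ e^{−st} · (∑_{k=0}^∞ λ^k · t^{αk+β−1} · (ln t − ψ(αk+β)) / Γ(αk+β)) dt = − s^{α−β} · ln s / (s^α − λ). (The integrand series is the term-by-term derivative with respect to β of t^{β−1} E_{α,β}(λ t^α).) -/
open Real MeasureTheory

open Set

noncomputable def Glog (c : ℝ) : ℝ := ∫ t in Set.Ioi (0:ℝ), t ^ (c-1) * (Real.log t * Real.exp (-t))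

lemma hasDerivAt_Gamma' {c : ℝ} (hc : 0 < c) : HasDerivAt Real.Gamma (Glog c) c := by
  have hre : (0:ℝ) < (c:ℂ).re := by simpa using hc
  have h := Complex.hasDerivAt_GammaIntegral hre
  have hev : Complex.Gamma =ᶠ[nhds (c:ℂ)] Complex.GammaIntegral := by
    filter_upwards [(isOpen_Ioi.preimage Complex.continuous_re).mem_nhds (by simpa using hc)]
      with z hz
    exact Complex.Gamma_eq_integral hz
  have h2 : HasDerivAt Complex.Gamma
      (∫ t : ℝ in Ioi 0, (t:ℂ) ^ ((c:ℂ) - 1) * (Real.log t * Real.exp (-t))) c :=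
    h.congr_of_eventuallyEq hev
  have h3 := h2.real_of_complex
  have key : (∫ t : ℝ in Ioi 0, (t:ℂ) ^ ((c:ℂ) - 1) * (Real.log t * Real.exp (-t)))
      = ((Glog c : ℝ) : ℂ) := by
    rw [Glog]
    rw [show ((∫ t in Set.Ioi (0:ℝ), t ^ (c-1) * (Real.log t * Real.exp (-t)) : ℝ) : ℂ)
      = ∫ t in Set.Ioi (0:ℝ), ((t ^ (c-1) * (Real.log t * Real.exp (-t)) : ℝ) : ℂ)
      from (integral_ofReal).symm]
    refine setIntegral_congr_fun measurableSet_Ioi fun t ht => ?_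
    rw [Complex.ofReal_mul, Complex.ofReal_mul]
    congr 1
    rw [Complex.ofReal_cpow (le_of_lt ht)]
    push_cast
    ring_nf
  rw [key] at h3
  have hfun : (fun x : ℝ => (Complex.Gamma x).re) = Real.Gamma := by
    funext x; rw [Complex.Gamma_ofReal, Complex.ofReal_re]
  rwa [hfun, Complex.ofReal_re] at h3



lemma abs_log_le' {ε t : ℝ} (hε : 0 < ε) (ht : 0 < t) :
    |Real.log t| ≤ (t ^ ε + t ^ (-ε)) / ε := by
  have key : ∀ u : ℝ, 0 < u → Real.log u ≤ u ^ ε / ε := by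
    intro u hu
    have h1 : Real.log (u ^ ε) ≤ u ^ ε - 1 := Real.log_le_sub_one_of_pos (rpow_pos_of_pos hu ε)
    rw [Real.log_rpow hu] at h1
    have h2 : Real.log u ≤ (u ^ ε - 1) / ε := by
      rw [le_div_iff₀ hε]; linarith [mul_comm ε (Real.log u)]
    have h3 : (u ^ ε - 1) / ε ≤ u ^ ε / ε := by gcongr; linarith
    linarith
  have hp := key t ht
  have hn := key t⁻¹ (inv_pos.2 ht)
  rw [Real.log_inv, Real.inv_rpow ht.le, ← Real.rpow_neg ht.le] at hn
  have h1 : 0 ≤ t ^ ε / ε := div_nonneg (rpow_pos_of_pos ht ε).le hε.le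
  have h2 : 0 ≤ t ^ (-ε) / ε := div_nonneg (rpow_pos_of_pos ht (-ε)).le hε.le
  have hd : (t ^ ε + t ^ (-ε)) / ε = t ^ ε / ε + t ^ (-ε) / ε := add_div _ _ _
  rw [abs_le, hd]
  constructor <;> linarith


lemma LpE_integrable {c s : ℝ} (hc : 0 < c) (hs : 0 < s) :
    IntegrableOn (fun t => Real.exp (-(s*t)) * t ^ (c-1)) (Ioi (0:ℝ)) := by
  have h := integrableOn_rpow_mul_exp_neg_mul_rpow (s := c-1) (p := 1) (b := s)
    (by linarith) one_pos hs
  refine h.congr_fun (fun t ht => ?_) measurableSet_Ioi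
  dsimp only; rw [rpow_one]; ring_nf

lemma LpE_integral {c s : ℝ} (hc : 0 < c) (hs : 0 < s) :
    ∫ t in Ioi (0:ℝ), Real.exp (-(s*t)) * t ^ (c-1) = Real.Gamma c * s ^ (-c) := by
  have h := integral_rpow_mul_exp_neg_mul_rpow (p := 1) (q := c-1) (b := s)
    one_pos (by linarith) hs
  rw [show ∫ t in Ioi (0:ℝ), Real.exp (-(s*t)) * t ^ (c-1)
      = ∫ x in Ioi (0:ℝ), x ^ (c-1) * Real.exp (-s * x ^ (1:ℝ)) from
    setIntegral_congr_fun measurableSet_Ioi fun t ht => by rw [rpow_one]; ring_nf]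
  rw [h, show c - 1 + 1 = c by ring, div_one]
  ring

lemma LpELog_contOn {c s : ℝ} :
    ContinuousOn (fun t : ℝ => Real.exp (-(s*t)) * t ^ (c-1) * Real.log t) (Ioi (0:ℝ)) := by
  apply ContinuousOn.mul
  apply ContinuousOn.mul
  · exact (Real.continuous_exp.comp (continuous_const.mul continuous_id).neg).continuousOn
  · exact fun t ht => (Real.continuousAt_rpow_const t _ (Or.inl (ne_of_gt ht))).continuousWithinAt
  · exact fun t ht => (Real.continuousAt_log (ne_of_gt ht)).continuousWithinAt

lemma LpELog_integrable {c s : ℝ} (hc : 0 < c) (hs : 0 < s) :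
    IntegrableOn (fun t => Real.exp (-(s*t)) * t ^ (c-1) * Real.log t) (Ioi (0:ℝ)) := by
  set ε := c/2 with hεdef
  have hε : 0 < ε := by positivity
  have hg : IntegrableOn (fun t : ℝ =>
      (Real.exp (-(s*t)) * t ^ (c+ε-1) + Real.exp (-(s*t)) * t ^ (c-ε-1)) / ε) (Ioi 0) :=
    ((LpE_integrable (by linarith) hs).add (LpE_integrable (by linarith) hs)).div_const ε
  refine Integrable.mono' hg (LpELog_contOn.aestronglyMeasurable measurableSet_Ioi) ?_
  filter_upwards [ae_restrict_mem measurableSet_Ioi] with t ht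
  have ht' : (0:ℝ) < t := ht
  have h1 : 0 ≤ Real.exp (-(s*t)) * t ^ (c-1) := by positivity
  rw [norm_mul, norm_mul, Real.norm_eq_abs, Real.norm_eq_abs, Real.norm_eq_abs,
    abs_of_nonneg (Real.exp_nonneg _), abs_of_nonneg (rpow_nonneg ht'.le _)]
  calc Real.exp (-(s*t)) * t ^ (c-1) * |Real.log t|
      ≤ Real.exp (-(s*t)) * t ^ (c-1) * ((t ^ ε + t ^ (-ε)) / ε) := by
        exact mul_le_mul_of_nonneg_left (abs_log_le' hε ht') h1
    _ = (Real.exp (-(s*t)) * t ^ (c+ε-1) + Real.exp (-(s*t)) * t ^ (c-ε-1)) / ε := by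
        rw [show c+ε-1 = (c-1) + ε by ring, show c-ε-1 = (c-1) + (-ε) by ring,
          Real.rpow_add ht', Real.rpow_add ht']
        ring

lemma LpELog_integral {c s : ℝ} (hc : 0 < c) (hs : 0 < s) :
    ∫ t in Ioi (0:ℝ), Real.exp (-(s*t)) * t ^ (c-1) * Real.log t
      = (Glog c - Real.Gamma c * Real.log s) * s ^ (-c) := by
  set g : ℝ → ℝ := fun u => u ^ (c-1) * (Real.log u * Real.exp (-u)) with hgdef
  have hgint : IntegrableOn g (Ioi (0:ℝ)) := by
    refine (LpELog_integrable hc one_pos).congr_fun (fun t ht => ?_) measurableSet_Ioi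
    simp only [hgdef, one_mul]; ring
  have hcomp : IntegrableOn (fun t => g (s*t)) (Ioi (0:ℝ)) := by
    have := (integrableOn_Ioi_comp_mul_left_iff g 0 hs).2 (by rwa [mul_zero])
    exact this
  have hptwise : ∀ t ∈ Ioi (0:ℝ), Real.exp (-(s*t)) * t ^ (c-1) * Real.log t
      = s ^ (1-c) * g (s*t) - Real.log s * (Real.exp (-(s*t)) * t ^ (c-1)) := by
    intro t ht
    have ht' : (0:ℝ) < t := ht
    have hst : (0:ℝ) < s*t := by positivity
    simp only [hgdef]
    rw [Real.mul_rpow hs.le ht'.le, Real.log_mul hs.ne' ht'.ne']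
    have : s ^ (1-c) * s ^ (c-1) = 1 := by
      rw [← Real.rpow_add hs]; norm_num
    linear_combination (-(t ^ (c-1) * ((Real.log s + Real.log t) * Real.exp (-(s*t))))) * this
  rw [setIntegral_congr_fun measurableSet_Ioi hptwise]
  rw [integral_sub (hcomp.const_mul _) ((LpE_integrable hc hs).const_mul _)]
  rw [integral_const_mul, integral_const_mul]
  have hsub := integral_comp_mul_left_Ioi g 0 hs
  rw [mul_zero] at hsub
  rw [hsub, LpE_integral hc hs]
  have hGlog : ∫ x in Ioi (0:ℝ), g x = Glog c := rfl
  rw [smul_eq_mul, hGlog]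
  have h1 : s ^ (1-c) * s⁻¹ = s ^ (-c) := by
    rw [← Real.rpow_neg_one s, ← Real.rpow_add hs, show 1-c + -1 = -c by ring]
  linear_combination Glog c * h1

lemma digamma_eq' {c : ℝ} (hc : 0 < c) : digamma c = Glog c / Real.Gamma c := by
  have h := (hasDerivAt_Gamma' hc).log (Real.Gamma_pos_of_pos hc).ne'
  exact h.deriv


lemma Gamma_le_right {c δ : ℝ} (hc : 0 < c) (hδ0 : 0 ≤ δ) (hδ1 : δ ≤ 1) :
    Real.Gamma (c+δ) ≤ (1+c) * Real.Gamma c := by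
  have hseg : c + δ ∈ segment ℝ c (c+1) := by
    rw [segment_eq_Icc (by linarith)]
    exact ⟨by linarith, by linarith⟩
  have h := Real.convexOn_Gamma.le_on_segment (mem_Ioi.2 hc) (mem_Ioi.2 (by linarith)) hseg
  have hΓ := Real.Gamma_pos_of_pos hc
  rw [Real.Gamma_add_one hc.ne'] at h
  rcases max_cases (Real.Gamma c) (c * Real.Gamma c) with ⟨he, _⟩ | ⟨he, _⟩ <;>
    rw [he] at h <;> nlinarith

lemma Gamma_le_left {c ε : ℝ} (hε : 0 < ε) (hε1 : ε ≤ 1) (hc : 2*ε ≤ c) :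
    Real.Gamma (c-ε) ≤ (1+c)^2 * Real.Gamma c / ε := by
  have hc0 : 0 < c := by linarith
  have hcε : 0 < c - ε := by linarith
  have hΓ := Real.Gamma_pos_of_pos hc0
  have hΓε := Real.Gamma_pos_of_pos hcε
  have e1 : Real.Gamma (c - ε + 1) = (c-ε) * Real.Gamma (c-ε) := Real.Gamma_add_one hcε.ne'
  have e2 : Real.Gamma (c - ε + 1 + 1) = (c-ε+1) * Real.Gamma (c-ε+1) :=
    Real.Gamma_add_one (by linarith)
  have hseg : c - ε + 1 + 1 ∈ segment ℝ (c+1) (c+2) := by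
    rw [segment_eq_Icc (by linarith)]
    exact ⟨by linarith, by linarith⟩
  have h := Real.convexOn_Gamma.le_on_segment (mem_Ioi.2 (by linarith : (0:ℝ) < c+1))
    (mem_Ioi.2 (by linarith : (0:ℝ) < c+2)) hseg
  have g1 : Real.Gamma (c+1) = c * Real.Gamma c := Real.Gamma_add_one hc0.ne'
  have g2 : Real.Gamma (c+2) = (c+1) * (c * Real.Gamma c) := by
    rw [show c+2 = (c+1)+1 by ring, Real.Gamma_add_one (by linarith), g1]
  have hmax : max (Real.Gamma (c+1)) (Real.Gamma (c+2)) ≤ (1+c)^2 * Real.Gamma c := by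
    rw [g1, g2]
    rcases max_cases (c * Real.Gamma c) ((c+1) * (c * Real.Gamma c)) with ⟨he, _⟩ | ⟨he, _⟩ <;>
      rw [he] <;> nlinarith [mul_pos hΓ hc0, mul_nonneg (sq_nonneg c) hΓ.le]
  rw [e2, e1] at h
  have hD : ε ≤ (c-ε+1) * (c-ε) := by nlinarith
  rw [le_div_iff₀ hε]
  calc Real.Gamma (c-ε) * ε ≤ Real.Gamma (c-ε) * ((c-ε+1) * (c-ε)) := by
        exact mul_le_mul_of_nonneg_left hD hΓε.le
    _ = (c-ε+1) * ((c-ε) * Real.Gamma (c-ε)) := by ring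
    _ ≤ (1+c)^2 * Real.Gamma c := le_trans h hmax

lemma LpEAbsLog_integrable {c s : ℝ} (hc : 0 < c) (hs : 0 < s) :
    IntegrableOn (fun t => Real.exp (-(s*t)) * t ^ (c-1) * |Real.log t|) (Ioi (0:ℝ)) := by
  refine IntegrableOn.congr_fun (LpELog_integrable hc hs).abs (fun t ht => ?_) measurableSet_Ioi
  have ht' : (0:ℝ) < t := ht
  rw [abs_mul, abs_mul, abs_of_nonneg (Real.exp_nonneg _), abs_of_nonneg (rpow_nonneg ht'.le _)]

lemma LpEAbsLog_le {c s ε : ℝ} (hs : 0 < s) (hε : 0 < ε) (hεc : ε < c) :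
    ∫ t in Ioi (0:ℝ), Real.exp (-(s*t)) * t ^ (c-1) * |Real.log t|
      ≤ (Real.Gamma (c+ε) * s ^ (-(c+ε)) + Real.Gamma (c-ε) * s ^ (-(c-ε))) / ε := by
  have hc : 0 < c := hε.trans hεc
  have hg : IntegrableOn (fun t : ℝ =>
      (Real.exp (-(s*t)) * t ^ (c+ε-1) + Real.exp (-(s*t)) * t ^ (c-ε-1)) / ε) (Ioi 0) :=
    ((LpE_integrable (by linarith) hs).add (LpE_integrable (by linarith) hs)).div_const ε
  have hmono := setIntegral_mono_on (LpEAbsLog_integrable hc hs) hg measurableSet_Ioi ?_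
  · refine hmono.trans_eq ?_
    rw [integral_div, integral_add (LpE_integrable (by linarith) hs) (LpE_integrable (by linarith) hs),
      LpE_integral (by linarith) hs, LpE_integral (by linarith) hs]
  · intro t ht
    have ht' : (0:ℝ) < t := ht
    have h1 : 0 ≤ Real.exp (-(s*t)) * t ^ (c-1) := by positivity
    calc Real.exp (-(s*t)) * t ^ (c-1) * |Real.log t|
        ≤ Real.exp (-(s*t)) * t ^ (c-1) * ((t ^ ε + t ^ (-ε)) / ε) :=
          mul_le_mul_of_nonneg_left (abs_log_le' hε ht') h1
      _ = (Real.exp (-(s*t)) * t ^ (c+ε-1) + Real.exp (-(s*t)) * t ^ (c-ε-1)) / ε := by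
          rw [show c+ε-1 = (c-1) + ε by ring, show c-ε-1 = (c-1) + (-ε) by ring,
            Real.rpow_add ht', Real.rpow_add ht']
          ring

lemma abs_digamma_le' {c ε : ℝ} (hε : 0 < ε) (hεc : ε < c) :
    |digamma c| ≤ (Real.Gamma (c+ε) + Real.Gamma (c-ε)) / (ε * Real.Gamma c) := by
  have hc : 0 < c := hε.trans hεc
  have hΓ := Real.Gamma_pos_of_pos hc
  rw [digamma_eq' hc, abs_div, abs_of_pos hΓ]
  have h1 : |Glog c| ≤ (Real.Gamma (c+ε) + Real.Gamma (c-ε)) / ε := by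
    have h2 : |Glog c| ≤ ∫ t in Ioi (0:ℝ), ‖t ^ (c-1) * (Real.log t * Real.exp (-t))‖ := by
      rw [← Real.norm_eq_abs]; exact norm_integral_le_integral_norm _
    have h3 : ∫ t in Ioi (0:ℝ), ‖t ^ (c-1) * (Real.log t * Real.exp (-t))‖
        = ∫ t in Ioi (0:ℝ), Real.exp (-(1*t)) * t ^ (c-1) * |Real.log t| := by
      refine setIntegral_congr_fun measurableSet_Ioi fun t ht => ?_
      have ht' : (0:ℝ) < t := ht
      rw [norm_mul, norm_mul, Real.norm_eq_abs, Real.norm_eq_abs, Real.norm_eq_abs,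
        abs_of_nonneg (Real.exp_nonneg _), abs_of_nonneg (rpow_nonneg ht'.le _), one_mul]
      ring
    have h4 := LpEAbsLog_le (c := c) one_pos hε hεc
    rw [Real.one_rpow, Real.one_rpow, mul_one, mul_one] at h4
    calc |Glog c| ≤ _ := h2
      _ = _ := h3
      _ ≤ _ := h4
  rw [div_le_div_iff₀ (by positivity) (by positivity)] at *
  calc |Glog c| * (ε * Real.Gamma c) = (|Glog c| * ε) * Real.Gamma c := by ring
    _ ≤ (Real.Gamma (c+ε) + Real.Gamma (c-ε)) * Real.Gamma c := by
        refine mul_le_mul_of_nonneg_right ?_ hΓ.le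
        rw [← le_div_iff₀ hε]; exact h1
    _ = _ := by ring

lemma term_integrable {c s A : ℝ} (hc : 0 < c) (hs : 0 < s) :
    IntegrableOn (fun t => Real.exp (-(s*t)) *
      (A * t ^ (c-1) * (Real.log t - digamma c) / Real.Gamma c)) (Ioi (0:ℝ)) := by
  have h := (((LpELog_integrable hc hs).const_mul (A / Real.Gamma c)).sub
    ((LpE_integrable hc hs).const_mul (A * digamma c / Real.Gamma c)))
  refine IntegrableOn.congr_fun h (fun t ht => ?_) measurableSet_Ioi
  simp only [Pi.sub_apply]
  ring

lemma term_integral {c s A : ℝ} (hc : 0 < c) (hs : 0 < s) :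
    ∫ t in Ioi (0:ℝ), Real.exp (-(s*t)) *
        (A * t ^ (c-1) * (Real.log t - digamma c) / Real.Gamma c)
      = -(A * Real.log s * s ^ (-c)) := by
  have hΓ := Real.Gamma_pos_of_pos hc
  have heq : ∀ t ∈ Ioi (0:ℝ), Real.exp (-(s*t)) *
      (A * t ^ (c-1) * (Real.log t - digamma c) / Real.Gamma c)
      = (A / Real.Gamma c) * (Real.exp (-(s*t)) * t ^ (c-1) * Real.log t)
        - (A * digamma c / Real.Gamma c) * (Real.exp (-(s*t)) * t ^ (c-1)) := by
    intro t _; ring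
  rw [setIntegral_congr_fun measurableSet_Ioi heq,
    integral_sub ((LpELog_integrable hc hs).const_mul _) ((LpE_integrable hc hs).const_mul _),
    integral_const_mul, integral_const_mul, LpELog_integral hc hs, LpE_integral hc hs,
    digamma_eq' hc]
  field_simp
  ring

lemma term_norm_le {c s A ε : ℝ} (hs : 0 < s) (hε : 0 < ε) (hεc : ε < c) :
    ∫ t in Ioi (0:ℝ), ‖Real.exp (-(s*t)) *
        (A * t ^ (c-1) * (Real.log t - digamma c) / Real.Gamma c)‖
      ≤ |A| * ((Real.Gamma (c+ε) * s ^ (-(c+ε)) + Real.Gamma (c-ε) * s ^ (-(c-ε)))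
          / (ε * Real.Gamma c)
        + ((Real.Gamma (c+ε) + Real.Gamma (c-ε)) / (ε * Real.Gamma c)) * s ^ (-c)) := by
  have hc : 0 < c := hε.trans hεc
  have hΓ := Real.Gamma_pos_of_pos hc
  have hnorm_int : IntegrableOn (fun t => ‖Real.exp (-(s*t)) *
      (A * t ^ (c-1) * (Real.log t - digamma c) / Real.Gamma c)‖) (Ioi (0:ℝ)) :=
    (term_integrable hc hs).norm
  have hg : IntegrableOn (fun t => (|A| / Real.Gamma c) *
      (Real.exp (-(s*t)) * t ^ (c-1) * |Real.log t|)
      + (|A| * |digamma c| / Real.Gamma c) * (Real.exp (-(s*t)) * t ^ (c-1))) (Ioi (0:ℝ)) :=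
    ((LpEAbsLog_integrable hc hs).const_mul _).add ((LpE_integrable hc hs).const_mul _)
  have hmono := setIntegral_mono_on hnorm_int hg measurableSet_Ioi ?_
  · refine hmono.trans ?_
    rw [integral_add ((LpEAbsLog_integrable hc hs).const_mul _) ((LpE_integrable hc hs).const_mul _),
      integral_const_mul, integral_const_mul, LpE_integral hc hs]
    have h1 := LpEAbsLog_le (c := c) hs hε hεc
    have h2 := abs_digamma_le' hε hεc
    have hsc : (0:ℝ) < s ^ (-c) := rpow_pos_of_pos hs _
    have e1 : |A| / Real.Gamma c * ((Real.Gamma (c+ε) * s ^ (-(c+ε)) + Real.Gamma (c-ε) * s ^ (-(c-ε))) / ε)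
        = |A| * ((Real.Gamma (c+ε) * s ^ (-(c+ε)) + Real.Gamma (c-ε) * s ^ (-(c-ε))) / (ε * Real.Gamma c)) := by
      rw [div_mul_div_comm, mul_comm (Real.Gamma c) ε, mul_div_assoc]
    have hb1 : |A| / Real.Gamma c * ∫ t in Ioi (0:ℝ), Real.exp (-(s*t)) * t ^ (c-1) * |Real.log t|
        ≤ |A| * ((Real.Gamma (c+ε) * s ^ (-(c+ε)) + Real.Gamma (c-ε) * s ^ (-(c-ε))) / (ε * Real.Gamma c)) := by
      rw [← e1]
      exact mul_le_mul_of_nonneg_left h1 (by positivity)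
    have hb2 : |A| * |digamma c| / Real.Gamma c * (Real.Gamma c * s ^ (-c))
        ≤ |A| * (((Real.Gamma (c+ε) + Real.Gamma (c-ε)) / (ε * Real.Gamma c)) * s ^ (-c)) := by
      have : |A| * |digamma c| / Real.Gamma c * (Real.Gamma c * s ^ (-c))
          = |A| * (|digamma c| * s ^ (-c)) := by field_simp
      rw [this]
      refine mul_le_mul_of_nonneg_left ?_ (abs_nonneg A)
      exact mul_le_mul_of_nonneg_right h2 hsc.le
    linarith
  · intro t ht
    have ht' : (0:ℝ) < t := ht
    have hp : (0:ℝ) ≤ Real.exp (-(s*t)) * t ^ (c-1) := by positivity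
    have habs : ‖Real.exp (-(s*t)) * (A * t ^ (c-1) * (Real.log t - digamma c) / Real.Gamma c)‖
        = (Real.exp (-(s*t)) * t ^ (c-1) * |A| / Real.Gamma c) * |Real.log t - digamma c| := by
      rw [Real.norm_eq_abs, abs_mul, abs_div, abs_mul, abs_mul,
        abs_of_nonneg (Real.exp_nonneg _), abs_of_nonneg (rpow_nonneg ht'.le _),
        abs_of_pos hΓ]
      ring
    rw [habs]
    have htri : |Real.log t - digamma c| ≤ |Real.log t| + |digamma c| := abs_sub _ _
    have hcoef : (0:ℝ) ≤ Real.exp (-(s*t)) * t ^ (c-1) * |A| / Real.Gamma c := by positivity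
    calc (Real.exp (-(s*t)) * t ^ (c-1) * |A| / Real.Gamma c) * |Real.log t - digamma c|
        ≤ (Real.exp (-(s*t)) * t ^ (c-1) * |A| / Real.Gamma c) * (|Real.log t| + |digamma c|) :=
          mul_le_mul_of_nonneg_left htri hcoef
      _ = (|A| / Real.Gamma c) * (Real.exp (-(s*t)) * t ^ (c-1) * |Real.log t|)
          + (|A| * |digamma c| / Real.Gamma c) * (Real.exp (-(s*t)) * t ^ (c-1)) := by ring


theorem laplace_deriv_beta_ML (α β lam s : ℝ) (hα : 0 < α) (hβ : 0 < β) (hs : 0 < s)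
    (hlam : |lam| < s ^ α) :
    (∫ t in Set.Ioi (0 : ℝ), Real.exp (-(s * t)) *
        ∑' k : ℕ, lam ^ k * t ^ (α * k + β - 1) *
          (Real.log t - digamma (α * k + β)) / Real.Gamma (α * k + β))
      = -(s ^ (α - β) * Real.log s / (s ^ α - lam)) := by
  have hsα : (0:ℝ) < s ^ α := rpow_pos_of_pos hs α
  set ε : ℝ := min β 1 / 2 with hεdef
  have hε : 0 < ε := by positivity
  have hε1 : ε ≤ 1 := by
    have := min_le_right β 1; simp only [hεdef]; linarith
  have hεβ : 2 * ε ≤ β := by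
    have := min_le_left β 1; simp only [hεdef]; linarith
  have hc : ∀ k : ℕ, 0 < α * k + β := fun k => by positivity
  have hεc : ∀ k : ℕ, ε < α * k + β := fun k => by
    have : (0:ℝ) ≤ α * k := by positivity
    linarith
  have h2εc : ∀ k : ℕ, 2 * ε ≤ α * k + β := fun k => by
    have : (0:ℝ) ≤ α * k := by positivity
    linarith
  set r : ℝ := |lam| / s ^ α with hrdef
  have hr0 : 0 ≤ r := div_nonneg (abs_nonneg _) hsα.le
  have hr1 : r < 1 := (div_lt_one hsα).2 hlam
  -- step 1 : rewrite integrand as a tsum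
  have step1 : ∀ t : ℝ, Real.exp (-(s * t)) *
      ∑' k : ℕ, lam ^ k * t ^ (α * k + β - 1) *
          (Real.log t - digamma (α * k + β)) / Real.Gamma (α * k + β)
      = ∑' k : ℕ, Real.exp (-(s * t)) * (lam ^ k * t ^ (α * k + β - 1) *
          (Real.log t - digamma (α * k + β)) / Real.Gamma (α * k + β)) := fun t =>
    (tsum_mul_left).symm
  rw [setIntegral_congr_fun measurableSet_Ioi (fun t _ => step1 t)]
  -- summability of norms
  have hepow : ∀ k : ℕ, s ^ (-(α * (k:ℝ) + β)) = ((s ^ α) ^ k)⁻¹ * s ^ (-β) := by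
    intro k
    have e1 : s ^ (α*(k:ℝ)) = (s^α)^k := by
      rw [Real.rpow_mul hs.le, Real.rpow_natCast]
    rw [show -(α*(k:ℝ)+β) = -(α*(k:ℝ)) + -β by ring, Real.rpow_add hs,
      Real.rpow_neg hs.le, e1]
  have hpow : ∀ k : ℕ, |lam| ^ k * s ^ (-(α * k + β)) = s ^ (-β) * r ^ k := by
    intro k
    rw [hepow k, hrdef, div_pow]
    have hp : (0:ℝ) < (s ^ α) ^ k := pow_pos hsα k
    field_simp
  have hbound : ∀ k : ℕ, (∫ t in Set.Ioi (0:ℝ), ‖Real.exp (-(s * t)) *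
      (lam ^ k * t ^ (α * k + β - 1) *
        (Real.log t - digamma (α * k + β)) / Real.Gamma (α * k + β))‖)
      ≤ ((s ^ ε + s ^ (-ε) + 2) / ε ^ 2 * s ^ (-β)) * ((1 + (α * k + β))^2 * r ^ k) := by
    intro k
    set c : ℝ := α * k + β with hceq
    have hc' : 0 < c := hc k
    have hcε : ε < c := hεc k
    have hc2ε : 2 * ε ≤ c := h2εc k
    have hΓ := Real.Gamma_pos_of_pos hc'
    have h1 := term_norm_le (c := c) (A := lam ^ k) hs hε hcε
    have hGr : Real.Gamma (c+ε) ≤ (1+c) * Real.Gamma c := Gamma_le_right hc' hε.le hε1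
    have hGl : Real.Gamma (c-ε) ≤ (1+c)^2 * Real.Gamma c / ε := Gamma_le_left hε hε1 hc2ε
    have hsm : s ^ (-(c+ε)) = s ^ (-c) * s ^ (-ε) := by
      rw [← Real.rpow_add hs]; ring_nf
    have hsp : s ^ (-(c-ε)) = s ^ (-c) * s ^ ε := by
      rw [← Real.rpow_add hs]; ring_nf
    have habs : |lam ^ k| = |lam| ^ k := abs_pow lam k
    have hsc : (0:ℝ) < s ^ (-c) := rpow_pos_of_pos hs _
    have hse : (0:ℝ) < s ^ ε := rpow_pos_of_pos hs _
    have hsne : (0:ℝ) < s ^ (-ε) := rpow_pos_of_pos hs _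
    have h1c : (1:ℝ) ≤ 1 + c := by linarith
    -- main numeric estimate
    have key : (Real.Gamma (c+ε) * s ^ (-(c+ε)) + Real.Gamma (c-ε) * s ^ (-(c-ε)))
          / (ε * Real.Gamma c)
        + ((Real.Gamma (c+ε) + Real.Gamma (c-ε)) / (ε * Real.Gamma c)) * s ^ (-c)
        ≤ (s ^ ε + s ^ (-ε) + 2) / ε ^ 2 * ((1 + c)^2 * s ^ (-c)) := by
      rw [hsm, hsp]
      set A := Real.Gamma (c+ε) with hA
      set B := Real.Gamma (c-ε) with hB
      set u := s ^ (-ε) with hu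
      set v := s ^ ε with hv
      set S := s ^ (-c) with hS
      set P : ℝ := 1 + c with hP
      have hP1 : (1:ℝ) ≤ P := by rw [hP]; linarith
      have hPΓ : (0:ℝ) ≤ P * Real.Gamma c := mul_nonneg (by linarith) hΓ.le
      have hAP : A ≤ P^2 * Real.Gamma c / ε := by
        refine hGr.trans ?_
        rw [le_div_iff₀ hε]
        have m1 := mul_le_mul_of_nonneg_left hε1 hPΓ
        have m2 := mul_le_mul_of_nonneg_left hP1 hPΓ
        linarith
      have hBP : B ≤ P^2 * Real.Gamma c / ε := hGl
      have hnum : A*u + B*v + A + B ≤ (P^2 * Real.Gamma c / ε) * (u + v + 2) := by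
        have b1 : A*u ≤ (P^2 * Real.Gamma c / ε) * u :=
          mul_le_mul_of_nonneg_right hAP hsne.le
        have b2 : B*v ≤ (P^2 * Real.Gamma c / ε) * v :=
          mul_le_mul_of_nonneg_right hBP hse.le
        linarith
      calc (A * (S*u) + B * (S*v)) / (ε * Real.Gamma c) + ((A+B)/(ε * Real.Gamma c)) * S
          = (A*u + B*v + A + B) * (S / (ε * Real.Gamma c)) := by ring
        _ ≤ ((P^2 * Real.Gamma c / ε) * (u+v+2)) * (S / (ε * Real.Gamma c)) :=
            mul_le_mul_of_nonneg_right hnum (div_nonneg hsc.le (mul_pos hε hΓ).le)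
        _ = (v + u + 2) / ε^2 * (P^2 * S) := by field_simp; ring
    calc (∫ t in Set.Ioi (0:ℝ), ‖Real.exp (-(s * t)) *
          (lam ^ k * t ^ (c - 1) * (Real.log t - digamma c) / Real.Gamma c)‖)
        ≤ |lam ^ k| * ((Real.Gamma (c+ε) * s ^ (-(c+ε)) + Real.Gamma (c-ε) * s ^ (-(c-ε)))
            / (ε * Real.Gamma c)
          + ((Real.Gamma (c+ε) + Real.Gamma (c-ε)) / (ε * Real.Gamma c)) * s ^ (-c)) := h1
      _ ≤ |lam ^ k| * ((s ^ ε + s ^ (-ε) + 2) / ε ^ 2 * ((1 + c)^2 * s ^ (-c))) :=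
          mul_le_mul_of_nonneg_left key (abs_nonneg _)
      _ = ((s ^ ε + s ^ (-ε) + 2) / ε ^ 2) * ((1 + c)^2 * (|lam| ^ k * s ^ (-c))) := by
          rw [habs]; ring
      _ = ((s ^ ε + s ^ (-ε) + 2) / ε ^ 2 * s ^ (-β)) * ((1 + c)^2 * r ^ k) := by
          rw [hpow k]; ring
  have hsummaj : Summable (fun k : ℕ => ((s ^ ε + s ^ (-ε) + 2) / ε ^ 2 * s ^ (-β))
      * ((1 + (α * k + β))^2 * r ^ k)) := by
    apply Summable.mul_left
    have s1 : Summable (fun k : ℕ => r ^ k) := summable_geometric_of_lt_one hr0 hr1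
    have hnr : ‖r‖ < 1 := by rwa [Real.norm_eq_abs, abs_of_nonneg hr0]
    have s2 : Summable (fun k : ℕ => (k:ℝ) ^ 1 * r ^ k) :=
      summable_pow_mul_geometric_of_norm_lt_one 1 hnr
    have s3 : Summable (fun k : ℕ => (k:ℝ) ^ 2 * r ^ k) :=
      summable_pow_mul_geometric_of_norm_lt_one 2 hnr
    have := ((s1.mul_left ((1+β)^2)).add (s2.mul_left (2*(1+β)*α))).add (s3.mul_left (α^2))
    refine this.congr fun k => ?_
    ring
  have hsum : Summable (fun k : ℕ => ∫ t in Set.Ioi (0:ℝ), ‖Real.exp (-(s * t)) *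
      (lam ^ k * t ^ (α * k + β - 1) *
        (Real.log t - digamma (α * k + β)) / Real.Gamma (α * k + β))‖) := by
    refine Summable.of_nonneg_of_le (fun k => ?_) hbound hsummaj
    exact integral_nonneg fun t => norm_nonneg _
  -- step 2 : swap integral and sum
  rw [← integral_tsum_of_summable_integral_norm (fun k => term_integrable (hc k) hs) hsum]
  -- step 3 : evaluate each integral and sum the geometric series
  have hval : ∀ k : ℕ, (∫ t in Set.Ioi (0:ℝ), Real.exp (-(s * t)) *
      (lam ^ k * t ^ (α * k + β - 1) *
        (Real.log t - digamma (α * k + β)) / Real.Gamma (α * k + β)))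
      = (-(Real.log s) * s ^ (-β)) * (lam / s ^ α) ^ k := by
    intro k
    rw [term_integral (hc k) hs]
    have hx : lam ^ k * s ^ (-(α * k + β)) = s ^ (-β) * (lam / s ^ α) ^ k := by
      rw [hepow k, div_pow]
      have hp : (0:ℝ) < (s ^ α) ^ k := pow_pos hsα k
      field_simp
    linear_combination (-(Real.log s)) * hx
  rw [tsum_congr hval, tsum_mul_left, tsum_geometric_of_norm_lt_one (ξ := lam / s ^ α)
    (by rwa [Real.norm_eq_abs, abs_div, abs_of_pos hsα, div_lt_one hsα])]
  -- final algebra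
  have hden : 0 < s ^ α - lam := by
    have := le_abs_self lam; linarith
  have h1 : (1 : ℝ) - lam / s ^ α = (s ^ α - lam) / s ^ α := by field_simp
  have h2 : s ^ (α - β) = s ^ α * s ^ (-β) := by
    rw [← Real.rpow_add hs]; ring_nf
  rw [h1, h2, inv_div]
  ring
end

section
/- Let α > 1, β > 0, and let s > 0 be a real number. Then ∫₀^∞ e^{−st} · (∑_{k=0}^∞ (− k · ψ(αk+β) / Γ(αk+β)) · t^k) dt = − ∑_{k=0}^∞ (k! · k · ψ(αk+β) / Γ(αk+β)) · s^{−k−1}. (The integrand series is the term-by-term derivative with respect to α of the Mittag-Leffler function E_{α,β}(t), and both the integral and the right-hand series converge since α > 1.) -/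
open Real MeasureTheory

open Filter

lemma diffAt_logGamma {x : ℝ} (hx : 0 < x) :
    DifferentiableAt ℝ (fun y : ℝ => Real.log (Real.Gamma y)) x :=
  DifferentiableAt.log
    (Real.differentiableAt_Gamma fun m =>
      ((neg_nonpos.mpr (Nat.cast_nonneg m)).trans_lt hx).ne')
    (Real.Gamma_pos_of_pos hx).ne'

lemma logGamma_succ_sub {x : ℝ} (hx : 0 < x) :
    Real.log (Real.Gamma (x + 1)) - Real.log (Real.Gamma x) = Real.log x := by
  rw [Real.Gamma_add_one hx.ne', Real.log_mul hx.ne' (Real.Gamma_pos_of_pos hx).ne']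
  ring

lemma digamma_le_log {x : ℝ} (hx : 0 < x) : digamma x ≤ Real.log x := by
  have h := Real.convexOn_log_Gamma.deriv_le_slope (x := x) (y := x + 1)
    (Set.mem_Ioi.mpr hx) (Set.mem_Ioi.mpr (by linarith)) (lt_add_one x)
    (diffAt_logGamma hx)
  rw [slope_def_field] at h
  exact (by simpa [logGamma_succ_sub hx] using h : deriv (Real.log ∘ Real.Gamma) x ≤ Real.log x)

lemma log_le_digamma {x : ℝ} (hx : 1 < x) : Real.log (x - 1) ≤ digamma x := by
  have hx1 : (0:ℝ) < x - 1 := by linarith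
  have h := Real.convexOn_log_Gamma.slope_le_deriv (x := x - 1) (y := x)
    (Set.mem_Ioi.mpr hx1) (Set.mem_Ioi.mpr (by linarith)) (by linarith)
    (diffAt_logGamma (by linarith))
  rw [slope_def_field] at h
  simp only [Function.comp_def] at h
  have e : Real.log (Real.Gamma x) - Real.log (Real.Gamma (x - 1)) = Real.log (x - 1) := by
    simpa using logGamma_succ_sub hx1
  rw [show x - (x - 1) = 1 by ring, div_one, e] at h
  exact h

lemma Gamma_lower {x a : ℝ} (hx : 2 ≤ x) (ha : 0 < a) :
    Real.Gamma x * (x - 1) ^ a ≤ Real.Gamma (x + a) := by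
  have hx1 : (0:ℝ) < x - 1 := by linarith
  have hx0 : (0:ℝ) < x := by linarith
  have h := Real.convexOn_log_Gamma.slope_mono_adjacent (x := x - 1) (y := x) (z := x + a)
    (Set.mem_Ioi.mpr hx1) (Set.mem_Ioi.mpr (by linarith)) (by linarith) (by linarith)
  simp only [Function.comp_def] at h
  have e : Real.log (Real.Gamma x) - Real.log (Real.Gamma (x - 1)) = Real.log (x - 1) := by
    simpa using logGamma_succ_sub hx1
  rw [show x - (x - 1) = 1 by ring, div_one, show x + a - x = a by ring, e] at h
  have hlog : Real.log (Real.Gamma x) + a * Real.log (x - 1) ≤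
      Real.log (Real.Gamma (x + a)) := by
    have := (le_div_iff₀ ha).mp h
    nlinarith [this]
  calc Real.Gamma x * (x - 1) ^ a
      = Real.exp (Real.log (Real.Gamma x) + a * Real.log (x - 1)) := by
        rw [Real.exp_add, Real.exp_log (Real.Gamma_pos_of_pos hx0),
          Real.rpow_def_of_pos hx1, mul_comm (Real.log (x - 1)) a]
    _ ≤ Real.exp (Real.log (Real.Gamma (x + a))) := Real.exp_le_exp.mpr hlog
    _ = Real.Gamma (x + a) := Real.exp_log (Real.Gamma_pos_of_pos (by linarith))

lemma integrableOn_exp_mul_pow {s : ℝ} (hs : 0 < s) (k : ℕ) :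
    IntegrableOn (fun t : ℝ => Real.exp (-(s * t)) * t ^ k) (Set.Ioi 0) := by
  have h := integrableOn_rpow_mul_exp_neg_mul_rpow (p := 1) (s := (k : ℝ)) (b := s)
    (neg_one_lt_zero.trans_le (Nat.cast_nonneg k)) zero_lt_one hs
  simp only [Real.rpow_one, Real.rpow_natCast, neg_mul] at h
  exact h.congr_fun (fun t _ => by ring) measurableSet_Ioi

lemma integral_exp_mul_pow {s : ℝ} (hs : 0 < s) (k : ℕ) :
    ∫ t in Set.Ioi (0 : ℝ), Real.exp (-(s * t)) * t ^ k = k.factorial / s ^ (k + 1) := by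
  have h := Real.integral_rpow_mul_exp_neg_mul_Ioi (a := (k : ℝ) + 1) (r := s)
    (by positivity) hs
  simp only [add_sub_cancel_right, Real.rpow_natCast] at h
  calc ∫ t in Set.Ioi (0 : ℝ), Real.exp (-(s * t)) * t ^ k
      = ∫ t in Set.Ioi (0 : ℝ), t ^ k * Real.exp (-(s * t)) := by
        congr 1; ext t; ring
    _ = (1 / s) ^ ((k : ℝ) + 1) * Real.Gamma ((k : ℝ) + 1) := h
    _ = k.factorial / s ^ (k + 1) := by
        rw [Real.Gamma_nat_eq_factorial,
          show ((k : ℝ) + 1) = ((k + 1 : ℕ) : ℝ) by push_cast; ring, Real.rpow_natCast]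
        rw [div_pow, one_pow]
        ring

set_option maxHeartbeats 1000000 in
lemma summable_B (α β s : ℝ) (hα : 1 < α) (hβ : 0 < β) (hs : 0 < s) :
    Summable (fun k : ℕ =>
      ((k : ℝ) * |digamma (α * k + β)| * k.factorial) /
        (Real.Gamma (α * k + β) * s ^ (k + 1))) := by
  set B : ℕ → ℝ := fun k =>
    ((k : ℝ) * |digamma (α * k + β)| * k.factorial) /
      (Real.Gamma (α * k + β) * s ^ (k + 1)) with hB
  have hα0 : (0 : ℝ) < α := by linarith
  have hxpos : ∀ k : ℕ, (0 : ℝ) < α * k + β := by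
    intro k; positivity
  have hBnonneg : ∀ k, 0 ≤ B k := by
    intro k
    have h1 := Real.Gamma_pos_of_pos (hxpos k)
    have h2 : (0:ℝ) < s ^ (k+1) := by positivity
    have h3 : (0:ℝ) ≤ (k : ℝ) * |digamma (α * k + β)| * k.factorial := by positivity
    exact div_nonneg h3 (by positivity)
  have htend : Tendsto (fun k : ℕ => α * k + β) atTop atTop := by
    apply tendsto_atTop_add_const_right
    exact (tendsto_natCast_atTop_atTop).const_mul_atTop hα0
  set M : ℝ := max 3 (max (α + 1) ((32 / s) ^ (α - 1)⁻¹ + 1)) with hM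
  have h1 := htend.eventually_ge_atTop M
  have h2 : ∀ᶠ k : ℕ in atTop, ((1 : ℝ) - β) / (α - 1) ≤ k :=
    tendsto_natCast_atTop_atTop.eventually_ge_atTop _
  refine summable_of_ratio_norm_eventually_le (r := 1/2) (by norm_num) ?_
  filter_upwards [h1, h2, eventually_ge_atTop 1] with k hk1 hk2 hk3
  set x : ℝ := α * k + β with hx
  have hx3 : 3 ≤ x := le_trans (le_max_left _ _) hk1
  have hxa : α + 1 ≤ x := le_trans (le_max_of_le_right (le_max_left _ _)) hk1
  have hxc : (32 / s) ^ (α - 1)⁻¹ + 1 ≤ x :=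
    le_trans (le_max_of_le_right (le_max_right _ _)) hk1
  have hx1 : (0:ℝ) < x - 1 := by linarith
  have hkx : (k : ℝ) ≤ x - 1 := by
    have : ((1 : ℝ) - β) ≤ (α - 1) * k := by
      rw [div_le_iff₀ (by linarith : (0:ℝ) < α - 1)] at hk2
      linarith
    simp only [hx]; nlinarith
  have hx' : α * (k + 1 : ℕ) + β = x + α := by push_cast; ring
  -- digamma bounds
  have hψx_lb : Real.log (x - 1) ≤ digamma x := log_le_digamma (by linarith)
  have hψx_nonneg : 0 ≤ digamma x :=
    le_trans (Real.log_nonneg (by linarith)) hψx_lb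
  have hψx_abs : |digamma x| = digamma x := abs_of_nonneg hψx_nonneg
  have hψ'_nonneg : 0 ≤ digamma (x + α) :=
    le_trans (Real.log_nonneg (by linarith)) (log_le_digamma (by linarith))
  have hψ'_ub : |digamma (x + α)| ≤ 4 * |digamma x| := by
    rw [abs_of_nonneg hψ'_nonneg, hψx_abs]
    have e1 : digamma (x + α) ≤ Real.log (x + α) := digamma_le_log (by linarith)
    have e2 : Real.log (x + α) ≤ Real.log (x * x) := by
      apply Real.log_le_log (by linarith)
      nlinarith
    have e3 : Real.log (x * x) = 2 * Real.log x := by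
      rw [Real.log_mul (by linarith) (by linarith)]; ring
    have e4 : Real.log x ≤ 2 * Real.log (x - 1) := by
      have : Real.log x ≤ Real.log ((x - 1) * (x - 1)) := by
        apply Real.log_le_log (by linarith)
        nlinarith
      rw [Real.log_mul hx1.ne' hx1.ne'] at this
      linarith
    nlinarith [hψx_lb]
  -- Gamma ratio bound
  have hR : 32 * k / s ≤ (x - 1) ^ (α - 1 + 1) := by
    rw [Real.rpow_add hx1, Real.rpow_one]
    have hc4 : 32 / s ≤ (x - 1) ^ (α - 1) := by
      have hbase : (32 / s) ^ (α - 1)⁻¹ ≤ x - 1 := by linarith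
      calc (32 / s : ℝ) = ((32 / s) ^ (α - 1)⁻¹) ^ (α - 1) := by
            rw [← Real.rpow_mul (by positivity : (0:ℝ) ≤ 32 / s),
              inv_mul_cancel₀ (by linarith : α - 1 ≠ 0), Real.rpow_one]
        _ ≤ (x - 1) ^ (α - 1) := Real.rpow_le_rpow (by positivity) hbase (by linarith)
    calc 32 * (k : ℝ) / s = (32 / s) * k := by ring
      _ ≤ (x - 1) ^ (α - 1) * (x - 1) := by
          apply mul_le_mul hc4 hkx (Nat.cast_nonneg k) (by positivity)
  have hR' : 32 * k / s ≤ (x - 1) ^ α := by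
    rwa [show α - 1 + 1 = α by ring] at hR
  have hΓ : Real.Gamma x * (x - 1) ^ α ≤ Real.Gamma (x + α) :=
    Gamma_lower (by linarith) hα0
  -- assemble
  have hΓx : (0:ℝ) < Real.Gamma x := Real.Gamma_pos_of_pos (by linarith)
  have hΓ' : (0:ℝ) < Real.Gamma (x + α) := Real.Gamma_pos_of_pos (by linarith)
  have hS : (0:ℝ) < s ^ (k + 1) := by positivity
  have hk1' : (1:ℝ) ≤ (k:ℝ) := by exact_mod_cast hk3
  rw [Real.norm_of_nonneg (hBnonneg _), Real.norm_of_nonneg (hBnonneg _)]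
  have hBk1 : B (k + 1) = (((k:ℝ) + 1) * |digamma (x + α)| * ((k + 1) * k.factorial)) /
      (Real.Gamma (x + α) * (s ^ (k + 1) * s)) := by
    simp only [hB, hx']
    push_cast [Nat.factorial_succ]
    ring
  have hBk : (1/2) * B k = ((k:ℝ) * |digamma x| * k.factorial) /
      (2 * (Real.Gamma x * s ^ (k + 1))) := by
    simp only [hB]; ring
  rw [hBk1, hBk, div_le_div_iff₀ (by positivity) (by positivity)]
  calc ((k:ℝ) + 1) * |digamma (x + α)| * (((k:ℝ) + 1) * k.factorial) *
        (2 * (Real.Gamma x * s ^ (k + 1)))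
      = 2 * (((k:ℝ)+1) * ((k:ℝ)+1)) * |digamma (x + α)| * k.factorial *
          Real.Gamma x * s ^ (k+1) := by ring
    _ ≤ 2 * (((k:ℝ)+1) * ((k:ℝ)+1)) * (4 * |digamma x|) * k.factorial *
          Real.Gamma x * s ^ (k+1) := by gcongr
    _ ≤ 2 * ((2*(k:ℝ)) * (2*(k:ℝ))) * (4 * |digamma x|) * k.factorial *
          Real.Gamma x * s ^ (k+1) := by
        gcongr <;> linarith
    _ = (32 * (k:ℝ) / s * s) * ((k:ℝ) * |digamma x| * k.factorial *
          Real.Gamma x * s ^ (k+1)) := by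
        rw [div_mul_cancel₀ _ hs.ne']; ring
    _ ≤ ((x - 1) ^ α * s) * ((k:ℝ) * |digamma x| * k.factorial *
          Real.Gamma x * s ^ (k+1)) := by gcongr
    _ = (k:ℝ) * |digamma x| * k.factorial *
          (Real.Gamma x * (x-1)^α * (s ^ (k+1) * s)) := by ring
    _ ≤ (k:ℝ) * |digamma x| * k.factorial *
          (Real.Gamma (x + α) * (s ^ (k+1) * s)) := by gcongr

theorem laplace_deriv_alpha_ML_pure (α β s : ℝ) (hα : 1 < α) (hβ : 0 < β) (hs : 0 < s) :
    (∫ t in Set.Ioi (0 : ℝ), Real.exp (-(s * t)) *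
        ∑' k : ℕ, (-((k : ℝ) * digamma (α * k + β) / Real.Gamma (α * k + β))) * t ^ k)
      = -∑' k : ℕ, ((k.factorial : ℝ) * k * digamma (α * k + β) / Real.Gamma (α * k + β)) *
          s ^ (-(k : ℝ) - 1) := by
  set c : ℕ → ℝ := fun k => -((k : ℝ) * digamma (α * k + β) / Real.Gamma (α * k + β)) with hc
  have hΓpos : ∀ k : ℕ, (0:ℝ) < Real.Gamma (α * k + β) := fun k =>
    Real.Gamma_pos_of_pos (by positivity)
  have habs : ∀ k : ℕ, |c k| = (k : ℝ) * |digamma (α * k + β)| / Real.Gamma (α * k + β) := by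
    intro k
    rw [hc]
    rw [abs_neg, abs_div, abs_mul, abs_of_nonneg (Nat.cast_nonneg (α := ℝ) k),
      abs_of_pos (hΓpos k)]
  have hInt : ∀ k : ℕ, Integrable (fun t : ℝ => Real.exp (-(s * t)) * (c k * t ^ k))
      (volume.restrict (Set.Ioi 0)) := by
    intro k
    have h : IntegrableOn (fun t : ℝ => c k * (Real.exp (-(s * t)) * t ^ k)) (Set.Ioi 0) :=
      (integrableOn_exp_mul_pow hs k).const_mul (c k)
    exact h.congr_fun (fun t _ => by ring) measurableSet_Ioi
  have hNorm : ∀ k : ℕ, (∫ t in Set.Ioi (0:ℝ), ‖Real.exp (-(s * t)) * (c k * t ^ k)‖)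
      = |c k| * (k.factorial / s ^ (k + 1)) := by
    intro k
    rw [← integral_exp_mul_pow hs k, ← integral_const_mul]
    refine setIntegral_congr_fun measurableSet_Ioi (fun t ht => ?_)
    rw [Real.norm_eq_abs, abs_mul, abs_mul, abs_of_pos (Real.exp_pos _),
      abs_of_pos (pow_pos (Set.mem_Ioi.mp ht) k)]
    ring
  have hSum : Summable (fun k : ℕ => ∫ t in Set.Ioi (0:ℝ), ‖Real.exp (-(s * t)) * (c k * t ^ k)‖) := by
    refine (summable_B α β s hα hβ hs).congr fun k => ?_
    rw [hNorm k, habs k]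
    ring
  calc (∫ t in Set.Ioi (0 : ℝ), Real.exp (-(s * t)) * ∑' k : ℕ, c k * t ^ k)
      = ∫ t in Set.Ioi (0 : ℝ), ∑' k : ℕ, Real.exp (-(s * t)) * (c k * t ^ k) := by
        simp_rw [tsum_mul_left]
    _ = ∑' k : ℕ, ∫ t in Set.Ioi (0:ℝ), Real.exp (-(s * t)) * (c k * t ^ k) :=
        (integral_tsum_of_summable_integral_norm hInt hSum).symm
    _ = ∑' k : ℕ, c k * (k.factorial / s ^ (k + 1)) := by
        refine tsum_congr fun k => ?_
        rw [← integral_exp_mul_pow hs k, ← integral_const_mul]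
        refine setIntegral_congr_fun measurableSet_Ioi (fun t _ => by ring)
    _ = ∑' k : ℕ, -(((k.factorial : ℝ) * k * digamma (α * k + β) / Real.Gamma (α * k + β)) *
          s ^ (-(k : ℝ) - 1)) := by
        refine tsum_congr fun k => ?_
        have hrp : s ^ (-(k : ℝ) - 1) = (s ^ (k + 1 : ℕ))⁻¹ := by
          rw [show -(k : ℝ) - 1 = -((k + 1 : ℕ) : ℝ) by push_cast; ring,
            Real.rpow_neg hs.le, Real.rpow_natCast]
        rw [hrp, hc]
        ring
    _ = -∑' k : ℕ, ((k.factorial : ℝ) * k * digamma (α * k + β) / Real.Gamma (α * k + β)) *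
          s ^ (-(k : ℝ) - 1) := tsum_neg
end

section
/- Let α > 0, β > 0, λ ∈ ℝ, and let s > 0 be a real number. Then ∫₀^∞ e^{−st} · t^{β−1} · W_{α,β}(λ t^α) dt = s^{−β} · exp(λ · s^{−α}). -/
open Real MeasureTheory

lemma gamma_integral_aux {a s : ℝ} (ha : 0 < a) (hs : 0 < s) :
    (∫ t in Set.Ioi (0 : ℝ), t ^ (a - 1) * Real.exp (-(s * t)))
      = Real.Gamma a * s ^ (-a) := by
  have h := integral_rpow_mul_exp_neg_mul_rpow (p := 1) (q := a - 1) (b := s)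
    one_pos (by linarith) hs
  simp only [rpow_one, neg_mul] at h
  rw [h, show a - 1 + 1 = a by ring, div_one, div_one]
  ring

lemma gamma_integrable_aux {a s : ℝ} (ha : 0 < a) (hs : 0 < s) :
    MeasureTheory.IntegrableOn (fun t : ℝ => t ^ (a - 1) * Real.exp (-(s * t)))
      (Set.Ioi 0) := by
  have h := integrableOn_rpow_mul_exp_neg_mul_rpow (s := a - 1) (p := 1) (b := s)
    (by linarith) one_pos hs
  simpa [rpow_one, neg_mul] using h

theorem laplace_Wright (α β lam s : ℝ) (hα : 0 < α) (hβ : 0 < β) (hs : 0 < s) :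
    (∫ t in Set.Ioi (0 : ℝ), Real.exp (-(s * t)) * t ^ (β - 1) *
        ∑' k : ℕ, (lam * t ^ α) ^ k / (k.factorial * Real.Gamma (α * k + β)))
      = s ^ (-β) * Real.exp (lam * s ^ (-α)) := by
  set F : ℕ → ℝ → ℝ := fun k t =>
    Real.exp (-(s * t)) * t ^ (β - 1) *
      ((lam * t ^ α) ^ k / (k.factorial * Real.Gamma (α * k + β))) with hF_def
  have hΓpos : ∀ k : ℕ, 0 < Real.Gamma (α * k + β) := fun k =>
    Real.Gamma_pos_of_pos (by positivity)
  have hapos : ∀ k : ℕ, 0 < α * (k : ℝ) + β := fun k => by positivity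
  -- pointwise equality of each term on Ioi 0
  have hFeq : ∀ (k : ℕ) (t : ℝ), t ∈ Set.Ioi (0 : ℝ) →
      F k t = (lam ^ k / (k.factorial * Real.Gamma (α * k + β))) *
        (t ^ (α * k + β - 1) * Real.exp (-(s * t))) := by
    intro k t ht
    have ht' : (0 : ℝ) < t := ht
    simp only [hF_def]
    rw [mul_pow, ← rpow_natCast (t ^ α) k, ← rpow_mul ht'.le,
      show α * (k : ℝ) + β - 1 = α * (k : ℝ) + (β - 1) by ring, rpow_add ht']
    ring
  have hFnormeq : ∀ (k : ℕ) (t : ℝ), t ∈ Set.Ioi (0 : ℝ) →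
      ‖F k t‖ = (|lam| ^ k / (k.factorial * Real.Gamma (α * k + β))) *
        (t ^ (α * k + β - 1) * Real.exp (-(s * t))) := by
    intro k t ht
    have ht' : (0 : ℝ) < t := ht
    rw [hFeq k t ht, Real.norm_eq_abs, abs_mul, abs_div, abs_pow]
    rw [abs_of_pos (show (0:ℝ) < (k.factorial : ℝ) * Real.Gamma (α * k + β) by positivity),
      abs_of_pos (show (0:ℝ) < t ^ (α * (k:ℝ) + β - 1) * Real.exp (-(s * t)) by positivity)]
  -- integrability
  have hFint : ∀ k : ℕ, MeasureTheory.IntegrableOn (F k) (Set.Ioi 0) := by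
    intro k
    refine MeasureTheory.IntegrableOn.congr_fun ?_ (fun t ht => (hFeq k t ht).symm)
      measurableSet_Ioi
    exact ((gamma_integrable_aux (hapos k) hs).const_mul _)
  -- value of the integral of each term
  have hFval : ∀ k : ℕ, (∫ t in Set.Ioi (0 : ℝ), F k t)
      = lam ^ k / k.factorial * ((s ^ (-α)) ^ k * s ^ (-β)) := by
    intro k
    rw [MeasureTheory.setIntegral_congr_fun measurableSet_Ioi (hFeq k),
      MeasureTheory.integral_const_mul, gamma_integral_aux (hapos k) hs]
    rw [show -(α * (k : ℝ) + β) = (-α) * (k : ℝ) + (-β) by ring, rpow_add hs,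
      ← rpow_natCast (s ^ (-α)) k, ← rpow_mul hs.le]
    field_simp
  -- value of the integral of the norm of each term
  have hFnormval : ∀ k : ℕ, (∫ t in Set.Ioi (0 : ℝ), ‖F k t‖)
      = |lam| ^ k / k.factorial * ((s ^ (-α)) ^ k * s ^ (-β)) := by
    intro k
    rw [MeasureTheory.setIntegral_congr_fun measurableSet_Ioi (hFnormeq k),
      MeasureTheory.integral_const_mul, gamma_integral_aux (hapos k) hs]
    rw [show -(α * (k : ℝ) + β) = (-α) * (k : ℝ) + (-β) by ring, rpow_add hs,
      ← rpow_natCast (s ^ (-α)) k, ← rpow_mul hs.le]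
    field_simp
  have hsum : Summable fun k : ℕ => ∫ t in Set.Ioi (0 : ℝ), ‖F k t‖ := by
    have : Summable fun k : ℕ => (|lam| * s ^ (-α)) ^ k / k.factorial * s ^ (-β) :=
      (Real.summable_pow_div_factorial _).mul_right _
    refine this.congr fun k => ?_
    rw [hFnormval k, mul_pow]
    ring
  -- swap integral and sum
  have hswap : (∫ t in Set.Ioi (0 : ℝ), ∑' k : ℕ, F k t)
      = ∑' k : ℕ, ∫ t in Set.Ioi (0 : ℝ), F k t :=
    (MeasureTheory.integral_tsum_of_summable_integral_norm hFint hsum).symm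
  calc (∫ t in Set.Ioi (0 : ℝ), Real.exp (-(s * t)) * t ^ (β - 1) *
        ∑' k : ℕ, (lam * t ^ α) ^ k / (k.factorial * Real.Gamma (α * k + β)))
      = ∫ t in Set.Ioi (0 : ℝ), ∑' k : ℕ, F k t := by
        refine MeasureTheory.integral_congr_ae (Filter.Eventually.of_forall fun t => ?_)
        simp only [hF_def]
        exact (tsum_mul_left).symm
    _ = ∑' k : ℕ, ∫ t in Set.Ioi (0 : ℝ), F k t := hswap
    _ = ∑' k : ℕ, (lam * s ^ (-α)) ^ k / k.factorial * s ^ (-β) := by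
        refine tsum_congr fun k => ?_
        rw [hFval k, mul_pow]; ring
    _ = s ^ (-β) * Real.exp (lam * s ^ (-α)) := by
        rw [tsum_mul_right, Real.exp_eq_exp_ℝ, NormedSpace.exp_eq_tsum_div]
        ring
end

section
/- Let α > 0, β > 0, λ ∈ ℝ, and let s > 0 be a real number. Then ∫₀^∞ e^{−st} · (∑_{k=0}^∞ k · λ^k · t^{αk+β−1} · (ln t − ψ(αk+β)) / (k! · Γ(αk+β))) dt = − λ · ln s · s^{−(α+β)} · exp(λ · s^{−α}). (The integrand series is the term-by-term derivative with respect to α of t^{β−1} W_{α,β}(λ t^α).) -/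
open Real MeasureTheory

namespace WrightAux2

lemma abs_log_le {y : ℝ} (hy : 0 < y) : |Real.log y| ≤ y + y⁻¹ := by
  have h1 := Real.log_le_sub_one_of_pos hy
  have h2 := Real.log_le_sub_one_of_pos (inv_pos.mpr hy)
  have hyi : 0 < y⁻¹ := inv_pos.mpr hy
  rcases le_or_gt 0 (Real.log y) with h | h
  · rw [abs_of_nonneg h]; linarith
  · rw [abs_of_neg h, ← Real.log_inv]; linarith [Real.log_inv y]

lemma abs_log_rpow_le {t δ : ℝ} (ht : 0 < t) (hδ : 0 < δ) :
    |Real.log t| ≤ (t ^ δ + t ^ (-δ)) / δ := by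
  have h1 : |Real.log (t ^ δ)| ≤ t ^ δ + (t ^ δ)⁻¹ := abs_log_le (Real.rpow_pos_of_pos ht δ)
  rw [Real.log_rpow ht, abs_mul, abs_of_pos hδ] at h1
  rw [le_div_iff₀ hδ, Real.rpow_neg ht.le]
  linarith

lemma integrableOn_exp_rpow {s c : ℝ} (hs : 0 < s) (hc : 0 < c) :
    IntegrableOn (fun t : ℝ => Real.exp (-(s * t)) * t ^ (c - 1)) (Set.Ioi 0) := by
  have h := integrableOn_rpow_mul_exp_neg_mul_rpow (p := 1) (s := c - 1) (b := s)
    (by linarith) one_pos hs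
  refine h.congr_fun (fun t ht => ?_) measurableSet_Ioi
  simp only [Real.rpow_one]
  ring_nf

lemma integral_exp_rpow {s a : ℝ} (hs : 0 < s) (ha : 0 < a) :
    ∫ t in Set.Ioi (0:ℝ), Real.exp (-(s * t)) * t ^ (a - 1)
      = Real.Gamma a * s ^ (-a) := by
  have h := Real.integral_rpow_mul_exp_neg_mul_Ioi ha hs
  rw [show (fun t : ℝ => Real.exp (-(s * t)) * t ^ (a - 1))
      = fun t : ℝ => t ^ (a - 1) * Real.exp (-(s * t)) from funext fun t => mul_comm _ _]
  rw [h, one_div, Real.inv_rpow hs.le, ← Real.rpow_neg hs.le, mul_comm]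

lemma aesm_exp_rpow_log (s a : ℝ) :
    AEStronglyMeasurable (fun t : ℝ => Real.exp (-(s * t)) * t ^ (a - 1) * Real.log t)
      (volume.restrict (Set.Ioi 0)) := by
  refine ContinuousOn.aestronglyMeasurable ?_ measurableSet_Ioi
  intro t ht
  have ht0 : (0:ℝ) < t := ht
  exact (((Real.continuous_exp.comp ((continuous_const.mul continuous_id).neg)).continuousAt.continuousWithinAt).mul
      ((Real.continuousAt_rpow_const t _ (Or.inl ht0.ne')).continuousWithinAt)).mul
    ((Real.continuousAt_log ht0.ne').continuousWithinAt)

lemma integrableOn_exp_rpow_log {s a : ℝ} (hs : 0 < s) (ha : 0 < a) :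
    IntegrableOn (fun t : ℝ => Real.exp (-(s * t)) * t ^ (a - 1) * Real.log t) (Set.Ioi 0) := by
  have hbound : IntegrableOn (fun t : ℝ => (2/a) *
      (Real.exp (-(s*t)) * t ^ (a/2 - 1) + Real.exp (-(s*t)) * t ^ (3*a/2 - 1))) (Set.Ioi 0) :=
    ((integrableOn_exp_rpow hs (by linarith)).add (integrableOn_exp_rpow hs (by linarith))).const_mul _
  refine Integrable.mono' hbound (aesm_exp_rpow_log s a) ?_
  rw [ae_restrict_iff' measurableSet_Ioi]
  filter_upwards with t ht
  have ht0 : (0:ℝ) < t := ht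
  have e1 : t^(a-1) * t^(a/2) = t^(3*a/2-1) := by rw [← Real.rpow_add ht0]; ring_nf
  have e2 : t^(a-1) * t^(-(a/2)) = t^(a/2-1) := by rw [← Real.rpow_add ht0]; ring_nf
  have hlog := abs_log_rpow_le ht0 (show (0:ℝ) < a/2 by linarith)
  rw [norm_mul, norm_mul, Real.norm_eq_abs, Real.norm_eq_abs, Real.norm_eq_abs,
    abs_of_pos (Real.exp_pos _), abs_of_pos (Real.rpow_pos_of_pos ht0 _)]
  have hrw : Real.exp (-(s*t)) * t^(a-1) * ((t^(a/2) + t^(-(a/2))) / (a/2))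
      = (2/a) * (Real.exp (-(s*t)) * t^(a/2-1) + Real.exp (-(s*t)) * t^(3*a/2-1)) := by
    rw [← e1, ← e2]
    field_simp
    ring
  calc Real.exp (-(s*t)) * t^(a-1) * |Real.log t|
      ≤ Real.exp (-(s*t)) * t^(a-1) * ((t^(a/2) + t^(-(a/2))) / (a/2)) :=
        mul_le_mul_of_nonneg_left hlog (by positivity)
    _ = (2/a) * (Real.exp (-(s*t)) * t^(a/2-1) + Real.exp (-(s*t)) * t^(3*a/2-1)) := hrw

lemma rpow_mem_le {t x lo hi : ℝ} (ht : 0 < t) (hlo : lo ≤ x) (hhi : x ≤ hi) :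
    t ^ x ≤ t ^ lo + t ^ hi := by
  rcases le_total 1 t with h | h
  · have := Real.rpow_le_rpow_of_exponent_le h hhi
    have := Real.rpow_pos_of_pos ht lo
    linarith
  · have := Real.rpow_le_rpow_of_exponent_ge ht h hlo
    have := Real.rpow_pos_of_pos ht hi
    linarith

lemma hasDerivAt_rpow_exponent {t : ℝ} (ht : 0 < t) (x : ℝ) :
    HasDerivAt (fun x : ℝ => t ^ (x - 1)) (t ^ (x - 1) * Real.log t) x := by
  have h0 := (Real.hasStrictDerivAt_const_rpow ht (x - 1)).hasDerivAt
  have h := h0.comp x ((hasDerivAt_id x).sub_const 1)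
  simpa [Function.comp_def] using h

lemma hasDerivAt_F {s a : ℝ} (hs : 0 < s) (ha : 0 < a) :
    HasDerivAt (fun x : ℝ => ∫ t in Set.Ioi (0:ℝ), Real.exp (-(s*t)) * t ^ (x - 1))
      (∫ t in Set.Ioi (0:ℝ), Real.exp (-(s*t)) * t ^ (a - 1) * Real.log t) a := by
  have key := hasDerivAt_integral_of_dominated_loc_of_deriv_le
    (μ := volume.restrict (Set.Ioi (0:ℝ)))
    (F := fun (x : ℝ) (t : ℝ) => Real.exp (-(s*t)) * t ^ (x-1))
    (F' := fun (x : ℝ) (t : ℝ) => Real.exp (-(s*t)) * t ^ (x-1) * Real.log t)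
    (x₀ := a) (s := Metric.ball a (a/2))
    (bound := fun t => (4/a) * (Real.exp (-(s*t)) *
      (t^(a/4-1) + t^(3*a/4-1) + t^(5*a/4-1) + t^(7*a/4-1))))
    (Metric.ball_mem_nhds a (by positivity)) ?_ ?_ ?_ ?_ ?_ ?_
  · exact key.2
  · filter_upwards with x
    refine ContinuousOn.aestronglyMeasurable ?_ measurableSet_Ioi
    intro t ht
    have ht0 : (0:ℝ) < t := ht
    exact ((Real.continuous_exp.comp ((continuous_const.mul continuous_id).neg)).continuousAt.continuousWithinAt).mul
      ((Real.continuousAt_rpow_const t _ (Or.inl ht0.ne')).continuousWithinAt)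
  · exact integrableOn_exp_rpow hs ha
  · exact aesm_exp_rpow_log s a
  · rw [ae_restrict_iff' measurableSet_Ioi]
    filter_upwards with t ht x hx
    have ht0 : (0:ℝ) < t := ht
    rw [Metric.mem_ball, Real.dist_eq, abs_sub_lt_iff] at hx
    have hx1 : a/2 - 1 ≤ x - 1 := by linarith [hx.1, hx.2]
    have hx2 : x - 1 ≤ 3*a/2 - 1 := by linarith [hx.1, hx.2]
    have hlog := abs_log_rpow_le ht0 (show (0:ℝ) < a/4 by linarith)
    rw [norm_mul, norm_mul, Real.norm_eq_abs, Real.norm_eq_abs, Real.norm_eq_abs,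
      abs_of_pos (Real.exp_pos _), abs_of_pos (Real.rpow_pos_of_pos ht0 _)]
    have hpow := rpow_mem_le ht0 hx1 hx2
    have e1 : t^(a/2-1) * t^(a/4) = t^(3*a/4-1) := by rw [← Real.rpow_add ht0]; ring_nf
    have e2 : t^(a/2-1) * t^(-(a/4)) = t^(a/4-1) := by rw [← Real.rpow_add ht0]; ring_nf
    have e3 : t^(3*a/2-1) * t^(a/4) = t^(7*a/4-1) := by rw [← Real.rpow_add ht0]; ring_nf
    have e4 : t^(3*a/2-1) * t^(-(a/4)) = t^(5*a/4-1) := by rw [← Real.rpow_add ht0]; ring_nf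
    have hrw : Real.exp (-(s*t)) * (t^(a/2-1) + t^(3*a/2-1)) * ((t^(a/4) + t^(-(a/4))) / (a/4))
        = (4/a) * (Real.exp (-(s*t)) *
          (t^(a/4-1) + t^(3*a/4-1) + t^(5*a/4-1) + t^(7*a/4-1))) := by
      rw [← e1, ← e2, ← e3, ← e4]
      field_simp
      ring
    calc Real.exp (-(s*t)) * t^(x-1) * |Real.log t|
        ≤ Real.exp (-(s*t)) * (t^(a/2-1) + t^(3*a/2-1)) * ((t^(a/4) + t^(-(a/4))) / (a/4)) := by
          apply mul_le_mul
          · exact mul_le_mul_of_nonneg_left hpow (Real.exp_pos _).le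
          · exact hlog
          · exact abs_nonneg _
          · positivity
      _ = _ := hrw
  · refine IntegrableOn.congr_fun
      ((((integrableOn_exp_rpow hs (by linarith : (0:ℝ) < a/4)).add
      (integrableOn_exp_rpow hs (by linarith : (0:ℝ) < 3*a/4))).add
      ((integrableOn_exp_rpow hs (by linarith : (0:ℝ) < 5*a/4)).add
      (integrableOn_exp_rpow hs (by linarith : (0:ℝ) < 7*a/4)))).const_mul (4/a))
      (fun t _ => by simp only [Pi.add_apply]; ring) measurableSet_Ioi
  · rw [ae_restrict_iff' measurableSet_Ioi]
    filter_upwards with t ht x _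
    have ht0 : (0:ℝ) < t := ht
    have h := (hasDerivAt_rpow_exponent ht0 x).const_mul (Real.exp (-(s*t)))
    simpa [mul_assoc] using h

lemma Gamma_ne_neg_nat {a : ℝ} (ha : 0 < a) : ∀ m : ℕ, a ≠ -(m:ℝ) := fun m =>
  (((neg_nonpos.mpr (Nat.cast_nonneg m)).trans_lt ha).ne')

lemma integral_exp_rpow_log {s a : ℝ} (hs : 0 < s) (ha : 0 < a) :
    ∫ t in Set.Ioi (0:ℝ), Real.exp (-(s*t)) * t ^ (a-1) * Real.log t
      = deriv Real.Gamma a * s ^ (-a) - Real.Gamma a * Real.log s * s ^ (-a) := by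
  have h1 := hasDerivAt_F hs ha
  have hΓ : HasDerivAt Real.Gamma (deriv Real.Gamma a) a :=
    (Real.differentiableAt_Gamma (Gamma_ne_neg_nat ha)).hasDerivAt
  have hp : HasDerivAt (fun x : ℝ => s ^ (-x)) (-(Real.log s) * s ^ (-a)) a := by
    have h0 := (Real.hasStrictDerivAt_const_rpow hs (-a)).hasDerivAt
    have h := h0.comp a (hasDerivAt_neg a)
    simpa [Function.comp_def, mul_comm, mul_left_comm] using h
  have hG : HasDerivAt (fun x : ℝ => Real.Gamma x * s ^ (-x))
      (deriv Real.Gamma a * s ^ (-a) + Real.Gamma a * (-(Real.log s) * s ^ (-a))) a := hΓ.mul hp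
  have heq : (fun x : ℝ => ∫ t in Set.Ioi (0:ℝ), Real.exp (-(s*t)) * t ^ (x-1))
      =ᶠ[nhds a] fun x => Real.Gamma x * s ^ (-x) := by
    filter_upwards [isOpen_Ioi.mem_nhds (Set.mem_Ioi.mpr ha)] with x hx
    exact integral_exp_rpow hs hx
  have h2 : HasDerivAt (fun x : ℝ => ∫ t in Set.Ioi (0:ℝ), Real.exp (-(s*t)) * t ^ (x-1))
      (deriv Real.Gamma a * s ^ (-a) + Real.Gamma a * (-(Real.log s) * s ^ (-a))) a :=
    hG.congr_of_eventuallyEq heq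
  have := h2.unique h1
  rw [← this]; ring

lemma digamma_eq {a : ℝ} (ha : 0 < a) :
    digamma a = deriv Real.Gamma a / Real.Gamma a := by
  have hΓ : HasDerivAt Real.Gamma (deriv Real.Gamma a) a :=
    (Real.differentiableAt_Gamma (Gamma_ne_neg_nat ha)).hasDerivAt
  exact (hΓ.log (Real.Gamma_pos_of_pos ha).ne').deriv

lemma integrableOn_term {s a : ℝ} (hs : 0 < s) (ha : 0 < a) (c : ℝ) :
    IntegrableOn (fun t : ℝ => Real.exp (-(s*t)) * t^(a-1) * (Real.log t - c)) (Set.Ioi 0) := by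
  have h := (integrableOn_exp_rpow_log hs ha).sub ((integrableOn_exp_rpow hs ha).const_mul c)
  exact IntegrableOn.congr_fun h (fun t _ => by simp only [Pi.sub_apply]; ring) measurableSet_Ioi

lemma integral_term {s a : ℝ} (hs : 0 < s) (ha : 0 < a) :
    ∫ t in Set.Ioi (0:ℝ), Real.exp (-(s*t)) * t ^ (a-1) * (Real.log t - digamma a)
      = -(Real.Gamma a * Real.log s * s ^ (-a)) := by
  have h1 : (fun t : ℝ => Real.exp (-(s*t)) * t^(a-1) * (Real.log t - digamma a))
      = fun t : ℝ => Real.exp (-(s*t)) * t^(a-1) * Real.log t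
        - digamma a * (Real.exp (-(s*t)) * t^(a-1)) := by
    funext t; ring
  rw [h1, integral_sub (integrableOn_exp_rpow_log hs ha)
      ((integrableOn_exp_rpow hs ha).const_mul _),
    integral_exp_rpow_log hs ha, integral_const_mul, integral_exp_rpow hs ha, digamma_eq ha]
  have hΓ := (Real.Gamma_pos_of_pos ha).ne'
  field_simp
  ring

lemma Gamma_rpow_convex {u v θ : ℝ} (hu : 0 < u) (hv : 0 < v) (hθ : 0 ≤ θ) (hθ1 : θ ≤ 1) :
    Real.Gamma (θ * u + (1-θ) * v) ≤ Real.Gamma u ^ θ * Real.Gamma v ^ (1-θ) := by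
  have hpos : 0 < θ * u + (1-θ) * v := by
    nlinarith [lt_min hu hv,
      mul_nonneg hθ (sub_nonneg.mpr (min_le_left u v)),
      mul_nonneg (by linarith : (0:ℝ) ≤ 1-θ) (sub_nonneg.mpr (min_le_right u v))]
  have h := Real.convexOn_log_Gamma.2 (Set.mem_Ioi.mpr hu) (Set.mem_Ioi.mpr hv)
    hθ (by linarith : (0:ℝ) ≤ 1-θ) (by ring)
  simp only [Function.comp, smul_eq_mul] at h
  calc Real.Gamma (θ * u + (1-θ) * v)
      = Real.exp (Real.log (Real.Gamma (θ * u + (1-θ) * v))) :=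
        (Real.exp_log (Real.Gamma_pos_of_pos hpos)).symm
    _ ≤ Real.exp (θ * Real.log (Real.Gamma u) + (1-θ) * Real.log (Real.Gamma v)) :=
        Real.exp_le_exp.mpr h
    _ = Real.Gamma u ^ θ * Real.Gamma v ^ (1-θ) := by
        rw [Real.exp_add, Real.rpow_def_of_pos (Real.Gamma_pos_of_pos hu),
          Real.rpow_def_of_pos (Real.Gamma_pos_of_pos hv), mul_comm θ, mul_comm (1-θ)]

lemma rpow_le_one_add {a δ : ℝ} (ha : 0 < a) (hδ0 : 0 ≤ δ) (hδ1 : δ ≤ 1) : a ^ δ ≤ 1 + a := by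
  rcases le_total a 1 with h | h
  · have := Real.rpow_le_one ha.le h hδ0
    linarith
  · have h2 : a ^ δ ≤ a ^ (1:ℝ) := Real.rpow_le_rpow_of_exponent_le h hδ1
    rw [Real.rpow_one] at h2
    linarith

lemma Gamma_add_le {a δ : ℝ} (ha : 0 < a) (hδ0 : 0 ≤ δ) (hδ1 : δ ≤ 1) :
    Real.Gamma (a + δ) ≤ Real.Gamma a * (1 + a) := by
  have hΓ := Real.Gamma_pos_of_pos ha
  have h := Gamma_rpow_convex (u := a+1) (v := a) (θ := δ) (by linarith) ha hδ0 hδ1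
  rw [show δ*(a+1)+(1-δ)*a = a+δ by ring, Real.Gamma_add_one ha.ne'] at h
  have h2 : (a * Real.Gamma a) ^ δ * Real.Gamma a ^ (1-δ) = a ^ δ * Real.Gamma a := by
    rw [Real.mul_rpow ha.le hΓ.le, mul_assoc, ← Real.rpow_add hΓ,
      show δ + (1-δ) = (1:ℝ) by ring, Real.rpow_one]
  rw [h2] at h
  calc Real.Gamma (a+δ) ≤ a ^ δ * Real.Gamma a := h
    _ ≤ (1+a) * Real.Gamma a :=
        mul_le_mul_of_nonneg_right (rpow_le_one_add ha hδ0 hδ1) hΓ.le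
    _ = Real.Gamma a * (1+a) := mul_comm _ _

lemma Gamma_sub_le {a δ : ℝ} (hδ0 : 0 < δ) (hδ1 : δ ≤ 1) (haδ : δ < a) :
    Real.Gamma (a - δ) ≤ Real.Gamma a * (1 + a) / (a - δ) := by
  have ha : 0 < a := hδ0.trans haδ
  have hΓ := Real.Gamma_pos_of_pos ha
  have h := Gamma_rpow_convex (u := a) (v := a+1) (θ := δ) ha (by linarith) hδ0.le hδ1
  rw [show δ*a+(1-δ)*(a+1) = (a-δ)+1 by ring,
    Real.Gamma_add_one (by linarith : a - δ ≠ 0)] at h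
  have hG1 : Real.Gamma (a+1) = a * Real.Gamma a := Real.Gamma_add_one ha.ne'
  rw [hG1] at h
  have h2 : Real.Gamma a ^ δ * (a * Real.Gamma a) ^ (1-δ) = a ^ (1-δ) * Real.Gamma a := by
    rw [Real.mul_rpow ha.le hΓ.le, ← mul_assoc,
      mul_comm (Real.Gamma a ^ δ), mul_assoc, mul_comm (Real.Gamma a ^ δ),
      ← Real.rpow_add hΓ, show (1-δ) + δ = (1:ℝ) by ring, Real.rpow_one]
  rw [h2] at h
  have h3 : a ^ (1-δ) ≤ 1 + a := rpow_le_one_add ha (by linarith) (by linarith)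
  rw [le_div_iff₀ (by linarith : (0:ℝ) < a - δ), mul_comm (Real.Gamma (a-δ))]
  calc (a-δ) * Real.Gamma (a-δ) ≤ a ^ (1-δ) * Real.Gamma a := h
    _ ≤ (1+a) * Real.Gamma a := mul_le_mul_of_nonneg_right h3 hΓ.le
    _ = Real.Gamma a * (1+a) := mul_comm _ _

lemma integral_norm_log_le {s a δ : ℝ} (hs : 0 < s) (hδ0 : 0 < δ) (hδa : δ < a) :
    ∫ t in Set.Ioi (0:ℝ), ‖Real.exp (-(s*t)) * t^(a-1) * Real.log t‖
      ≤ (1/δ) * (Real.Gamma (a+δ) * s^(-(a+δ)) + Real.Gamma (a-δ) * s^(-(a-δ))) := by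
  have ha : 0 < a := hδ0.trans hδa
  have hint1 := integrableOn_exp_rpow hs (show (0:ℝ) < a+δ by linarith)
  have hint2 := integrableOn_exp_rpow hs (show (0:ℝ) < a-δ by linarith)
  have hint1' : IntegrableOn (fun t : ℝ => Real.exp (-(s*t)) * t^(a+δ-1)) (Set.Ioi 0) := by
    refine hint1.congr_fun (fun t _ => by rw [show (a+δ)-1 = a+δ-1 by ring]) measurableSet_Ioi
  have hint2' : IntegrableOn (fun t : ℝ => Real.exp (-(s*t)) * t^(a-δ-1)) (Set.Ioi 0) := by
    refine hint2.congr_fun (fun t _ => by rw [show (a-δ)-1 = a-δ-1 by ring]) measurableSet_Ioi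
  have hint : IntegrableOn (fun t : ℝ => (1/δ) *
      (Real.exp (-(s*t)) * t^(a+δ-1) + Real.exp (-(s*t)) * t^(a-δ-1))) (Set.Ioi 0) :=
    (hint1'.add hint2').const_mul _
  have hle : ∀ t ∈ Set.Ioi (0:ℝ), ‖Real.exp (-(s*t)) * t^(a-1) * Real.log t‖
      ≤ (1/δ) * (Real.exp (-(s*t)) * t^(a+δ-1) + Real.exp (-(s*t)) * t^(a-δ-1)) := by
    intro t ht
    have ht0 : (0:ℝ) < t := ht
    have e1 : t^(a-1) * t^δ = t^(a+δ-1) := by rw [← Real.rpow_add ht0]; ring_nf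
    have e2 : t^(a-1) * t^(-δ) = t^(a-δ-1) := by rw [← Real.rpow_add ht0]; ring_nf
    have hlog := abs_log_rpow_le ht0 hδ0
    rw [norm_mul, norm_mul, Real.norm_eq_abs, Real.norm_eq_abs, Real.norm_eq_abs,
      abs_of_pos (Real.exp_pos _), abs_of_pos (Real.rpow_pos_of_pos ht0 _)]
    have hrw : Real.exp (-(s*t)) * t^(a-1) * ((t^δ + t^(-δ)) / δ)
        = (1/δ) * (Real.exp (-(s*t)) * t^(a+δ-1) + Real.exp (-(s*t)) * t^(a-δ-1)) := by
      rw [← e1, ← e2]; field_simp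
    calc Real.exp (-(s*t)) * t^(a-1) * |Real.log t|
        ≤ Real.exp (-(s*t)) * t^(a-1) * ((t^δ + t^(-δ)) / δ) :=
          mul_le_mul_of_nonneg_left hlog (by positivity)
      _ = _ := hrw
  calc ∫ t in Set.Ioi (0:ℝ), ‖Real.exp (-(s*t)) * t^(a-1) * Real.log t‖
      ≤ ∫ t in Set.Ioi (0:ℝ), (1/δ) *
          (Real.exp (-(s*t)) * t^(a+δ-1) + Real.exp (-(s*t)) * t^(a-δ-1)) :=
        setIntegral_mono_on ((integrableOn_exp_rpow_log hs ha).norm) hint measurableSet_Ioi hle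
    _ = (1/δ) * (Real.Gamma (a+δ) * s^(-(a+δ)) + Real.Gamma (a-δ) * s^(-(a-δ))) := by
        rw [integral_const_mul, integral_add hint1' hint2']
        congr 1
        rw [show a+δ-1 = (a+δ)-1 by ring, show a-δ-1 = (a-δ)-1 by ring,
          integral_exp_rpow hs (by linarith), integral_exp_rpow hs (by linarith)]

lemma abs_deriv_Gamma_le {a δ : ℝ} (hδ0 : 0 < δ) (hδa : δ < a) :
    |deriv Real.Gamma a| ≤ (1/δ) * (Real.Gamma (a+δ) + Real.Gamma (a-δ)) := by
  have ha : 0 < a := hδ0.trans hδa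
  have h := integral_exp_rpow_log (s := 1) one_pos ha
  rw [Real.log_one, Real.one_rpow] at h
  have h2 : deriv Real.Gamma a = ∫ t in Set.Ioi (0:ℝ),
      Real.exp (-(1*t)) * t ^ (a-1) * Real.log t := by rw [h]; ring
  rw [h2]
  calc |∫ t in Set.Ioi (0:ℝ), Real.exp (-(1*t)) * t ^ (a-1) * Real.log t|
      ≤ ∫ t in Set.Ioi (0:ℝ), ‖Real.exp (-(1*t)) * t ^ (a-1) * Real.log t‖ :=
        abs_le.mpr ⟨neg_le.mp (neg_le_of_neg_le (by
          have := norm_integral_le_integral_norm (μ := volume.restrict (Set.Ioi (0:ℝ)))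
            (f := fun t : ℝ => Real.exp (-(1*t)) * t ^ (a-1) * Real.log t)
          rw [Real.norm_eq_abs] at this
          linarith [abs_le.mp (le_refl |∫ t in Set.Ioi (0:ℝ), Real.exp (-(1*t)) * t ^ (a-1) * Real.log t|)])),
          by
          have := norm_integral_le_integral_norm (μ := volume.restrict (Set.Ioi (0:ℝ)))
            (f := fun t : ℝ => Real.exp (-(1*t)) * t ^ (a-1) * Real.log t)
          rw [Real.norm_eq_abs] at this
          linarith [le_abs_self (∫ t in Set.Ioi (0:ℝ), Real.exp (-(1*t)) * t ^ (a-1) * Real.log t)]⟩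
    _ ≤ (1/δ) * (Real.Gamma (a+δ) * (1:ℝ)^(-(a+δ)) + Real.Gamma (a-δ) * (1:ℝ)^(-(a-δ))) :=
        integral_norm_log_le one_pos hδ0 hδa
    _ = (1/δ) * (Real.Gamma (a+δ) + Real.Gamma (a-δ)) := by
        rw [Real.one_rpow, Real.one_rpow, mul_one, mul_one]

lemma integral_norm_term_le {s a δ : ℝ} (hs : 0 < s) (hδ0 : 0 < δ) (haδ : δ < a) :
    ∫ t in Set.Ioi (0:ℝ), ‖Real.exp (-(s*t)) * t^(a-1) * (Real.log t - digamma a)‖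
      ≤ (1/δ) * (s^(-δ) + s^δ + 1) * s^(-a) * (Real.Gamma (a+δ) + Real.Gamma (a-δ)) := by
  have ha : 0 < a := hδ0.trans haδ
  have hΓ := Real.Gamma_pos_of_pos ha
  have hXlog := integrableOn_exp_rpow_log hs ha
  have hX := integrableOn_exp_rpow hs ha
  have hψ : |digamma a| * Real.Gamma a ≤ (1/δ) * (Real.Gamma (a+δ) + Real.Gamma (a-δ)) := by
    rw [digamma_eq ha, abs_div, abs_of_pos hΓ, div_mul_cancel₀ _ hΓ.ne']
    exact abs_deriv_Gamma_le hδ0 haδ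
  have hf := integrableOn_term hs ha (digamma a)
  have hintb : IntegrableOn (fun t : ℝ => ‖Real.exp (-(s*t)) * t^(a-1) * Real.log t‖
      + |digamma a| * (Real.exp (-(s*t)) * t^(a-1))) (Set.Ioi 0) :=
    hXlog.norm.add (hX.const_mul _)
  have step1 : ∫ t in Set.Ioi (0:ℝ), ‖Real.exp (-(s*t)) * t^(a-1) * (Real.log t - digamma a)‖
      ≤ (∫ t in Set.Ioi (0:ℝ), ‖Real.exp (-(s*t)) * t^(a-1) * Real.log t‖)
        + |digamma a| * (Real.Gamma a * s^(-a)) := by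
    calc ∫ t in Set.Ioi (0:ℝ), ‖Real.exp (-(s*t)) * t^(a-1) * (Real.log t - digamma a)‖
        ≤ ∫ t in Set.Ioi (0:ℝ), (‖Real.exp (-(s*t)) * t^(a-1) * Real.log t‖
            + |digamma a| * (Real.exp (-(s*t)) * t^(a-1))) := by
          refine setIntegral_mono_on hf.norm hintb measurableSet_Ioi ?_
          intro t ht
          have ht0 : (0:ℝ) < t := ht
          have hXpos : 0 < Real.exp (-(s*t)) * t^(a-1) := by positivity
          have : Real.exp (-(s*t)) * t^(a-1) * (Real.log t - digamma a)
              = Real.exp (-(s*t)) * t^(a-1) * Real.log t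
                - digamma a * (Real.exp (-(s*t)) * t^(a-1)) := by ring
          rw [this]
          refine (norm_sub_le _ _).trans ?_
          rw [norm_mul (digamma a), Real.norm_eq_abs (digamma a),
            Real.norm_eq_abs (Real.exp (-(s*t)) * t^(a-1)), abs_of_pos hXpos]
      _ = (∫ t in Set.Ioi (0:ℝ), ‖Real.exp (-(s*t)) * t^(a-1) * Real.log t‖)
            + |digamma a| * ∫ t in Set.Ioi (0:ℝ), Real.exp (-(s*t)) * t^(a-1) := by
          rw [integral_add hXlog.norm (hX.const_mul _), integral_const_mul]
      _ = _ := by rw [integral_exp_rpow hs ha]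
  have h1 := integral_norm_log_le hs hδ0 haδ
  have e1 : s^(-(a+δ)) = s^(-a) * s^(-δ) := by rw [← Real.rpow_add hs]; ring_nf
  have e2 : s^(-(a-δ)) = s^(-a) * s^δ := by rw [← Real.rpow_add hs]; ring_nf
  have hψ2 : |digamma a| * (Real.Gamma a * s^(-a))
      ≤ (1/δ) * (Real.Gamma (a+δ) + Real.Gamma (a-δ)) * s^(-a) := by
    have := mul_le_mul_of_nonneg_right hψ (Real.rpow_nonneg hs.le (-a))
    calc |digamma a| * (Real.Gamma a * s^(-a)) = |digamma a| * Real.Gamma a * s^(-a) := by ring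
      _ ≤ (1/δ) * (Real.Gamma (a+δ) + Real.Gamma (a-δ)) * s^(-a) := this
  rw [e1, e2] at h1
  have hΓp := Real.Gamma_pos_of_pos (show (0:ℝ) < a+δ by linarith)
  have hΓm := Real.Gamma_pos_of_pos (show (0:ℝ) < a-δ by linarith)
  have hsp := Real.rpow_pos_of_pos hs (-a)
  have hsd1 := Real.rpow_pos_of_pos hs (-δ)
  have hsd2 := Real.rpow_pos_of_pos hs δ
  have hδi : 0 < 1/δ := by positivity
  calc ∫ t in Set.Ioi (0:ℝ), ‖Real.exp (-(s*t)) * t^(a-1) * (Real.log t - digamma a)‖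
      ≤ (∫ t in Set.Ioi (0:ℝ), ‖Real.exp (-(s*t)) * t^(a-1) * Real.log t‖)
        + |digamma a| * (Real.Gamma a * s^(-a)) := step1
    _ ≤ (1/δ) * (Real.Gamma (a+δ) * (s^(-a) * s^(-δ)) + Real.Gamma (a-δ) * (s^(-a) * s^δ))
        + (1/δ) * (Real.Gamma (a+δ) + Real.Gamma (a-δ)) * s^(-a) := add_le_add h1 hψ2
    _ ≤ (1/δ) * (s^(-δ) + s^δ + 1) * s^(-a) * (Real.Gamma (a+δ) + Real.Gamma (a-δ)) := by
        nlinarith [mul_pos (mul_pos hδi hsp) (mul_pos hΓp hsd2),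
          mul_pos (mul_pos hδi hsp) (mul_pos hΓm hsd1)]

lemma nat_mul_succ_le (k : ℕ) : (k:ℝ) * (k+1) ≤ 2 * 4^k := by
  have hk : (k:ℝ) ≤ 2^k := by exact_mod_cast (Nat.lt_two_pow_self (n := k)).le
  have h1 : (1:ℝ) ≤ 2^k := one_le_pow₀ (by norm_num)
  have hk1 : (k:ℝ)+1 ≤ 2*2^k := by linarith
  have h := mul_le_mul hk hk1 (by positivity) (by positivity)
  calc (k:ℝ)*(k+1) ≤ 2^k * (2*2^k) := h
    _ = 2 * 4^k := by rw [show (4:ℝ) = 2*2 by norm_num, mul_pow]; ring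

lemma summable_sq {r : ℝ} (hr : 0 ≤ r) :
    Summable (fun k : ℕ => (k:ℝ) * (k+1) * r^k / k.factorial) := by
  refine Summable.of_nonneg_of_le (fun k => by positivity) (fun k => ?_)
    ((Real.summable_pow_div_factorial (4*r)).mul_left 2)
  have h2 : (k:ℝ)*(k+1)*r^k ≤ 2*4^k*r^k :=
    mul_le_mul_of_nonneg_right (nat_mul_succ_le k) (pow_nonneg hr k)
  have hfac : (0:ℝ) < (k.factorial : ℝ) := by positivity
  calc (k:ℝ)*(k+1)*r^k / k.factorial ≤ (2*4^k*r^k) / k.factorial := by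
        exact (div_le_div_iff_of_pos_right hfac).mpr h2
    _ = 2 * ((4*r)^k / k.factorial) := by rw [mul_pow]; ring

lemma summable_mul_pow (q : ℝ) : Summable (fun k : ℕ => (k:ℝ) * q^k / k.factorial) := by
  refine Summable.of_norm (Summable.of_nonneg_of_le (fun k => norm_nonneg _) (fun k => ?_)
    (Real.summable_pow_div_factorial (2*|q|)))
  have hk : (k:ℝ) ≤ 2^k := by exact_mod_cast (Nat.lt_two_pow_self (n := k)).le
  have hfac : (0:ℝ) < (k.factorial : ℝ) := by positivity
  have : ‖(k:ℝ) * q^k / k.factorial‖ = (k:ℝ) * |q|^k / k.factorial := by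
    rw [norm_div, norm_mul, norm_pow, Real.norm_eq_abs, Real.norm_eq_abs, Real.norm_eq_abs,
      Nat.abs_cast, Nat.abs_cast]
  rw [this]
  have h2 : (k:ℝ) * |q|^k ≤ 2^k * |q|^k :=
    mul_le_mul_of_nonneg_right hk (pow_nonneg (abs_nonneg q) k)
  calc (k:ℝ) * |q|^k / k.factorial ≤ (2^k * |q|^k) / k.factorial := by
        exact (div_le_div_iff_of_pos_right hfac).mpr h2
    _ = (2*|q|)^k / k.factorial := by rw [mul_pow]

lemma tsum_mul_pow_div_factorial (q : ℝ) :
    ∑' k : ℕ, (k:ℝ) * q^k / k.factorial = q * Real.exp q := by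
  have hsum := summable_mul_pow q
  rw [Summable.tsum_eq_zero_add hsum]
  simp only [Nat.cast_zero, zero_mul, zero_div, zero_add]
  have hterm : ∀ k : ℕ, ((k+1 : ℕ):ℝ) * q^(k+1) / ((k+1).factorial : ℝ)
      = q * (q^k / k.factorial) := by
    intro k
    have hk : ((k:ℝ)+1) ≠ 0 := by positivity
    have hfac : ((k.factorial : ℝ)) ≠ 0 := by positivity
    rw [Nat.factorial_succ]
    push_cast
    rw [pow_succ]
    field_simp
  rw [tsum_congr hterm, tsum_mul_left]
  congr 1
  rw [Real.exp_eq_exp_ℝ, NormedSpace.exp_eq_tsum_div]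

end WrightAux2

set_option maxHeartbeats 2000000 in
open WrightAux2 in
theorem laplace_deriv_alpha_Wright2 (α β lam s : ℝ) (hα : 0 < α) (hβ : 0 < β) (hs : 0 < s) :
    (∫ t in Set.Ioi (0 : ℝ), Real.exp (-(s * t)) *
        ∑' k : ℕ, (k : ℝ) * lam ^ k * t ^ (α * k + β - 1) *
          (Real.log t - digamma (α * k + β)) / (k.factorial * Real.Gamma (α * k + β)))
      = -(lam * Real.log s * s ^ (-(α + β)) * Real.exp (lam * s ^ (-α))) := by
  have hδ0 : 0 < min β 1 / 2 := by
    have := lt_min hβ one_pos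
    linarith
  set δ : ℝ := min β 1 / 2 with hδdef
  have hδ1 : δ ≤ 1/2 := by
    have := min_le_right β 1
    rw [hδdef]; linarith
  have hδβ : δ ≤ β/2 := by
    have := min_le_left β 1
    rw [hδdef]; linarith
  have ha : ∀ k : ℕ, 0 < α * k + β := fun k => by positivity
  have haδ : ∀ k : ℕ, δ < α * k + β := fun k => by
    have h0 : (0:ℝ) ≤ α * k := by positivity
    linarith
  set base : ℕ → ℝ → ℝ := fun k t => Real.exp (-(s*t)) * t^(α*k+β-1) *
    (Real.log t - digamma (α*k+β)) with hbase
  set c : ℕ → ℝ := fun k => (k:ℝ) * lam^k / (k.factorial * Real.Gamma (α*k+β)) with hc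
  have hIk : ∀ k, Integrable (fun t => c k * base k t) (volume.restrict (Set.Ioi 0)) :=
    fun k => (integrableOn_term hs (ha k) (digamma (α*k+β))).const_mul (c k)
  set q : ℝ := |lam| * s^(-α) with hq
  have hq0 : 0 ≤ q := by positivity
  set C : ℝ := (1/δ) * (s^(-δ) + s^δ + 1) * (1 + 2/β) * s^(-β) with hC
  have hC0 : 0 ≤ C := by positivity
  set K : ℝ := C * (1+β+α) with hK
  have hsa : ∀ k : ℕ, s^(-(α*k+β)) = (s^(-α))^k * s^(-β) := by
    intro k
    rw [← Real.rpow_natCast (s ^ (-α)) k, ← Real.rpow_mul hs.le, ← Real.rpow_add hs]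
    ring_nf
  have hbound : ∀ k : ℕ, (∫ t in Set.Ioi (0:ℝ), ‖c k * base k t‖)
      ≤ K * ((k:ℝ)*((k:ℝ)+1)* q^k / k.factorial) := by
    intro k
    have hak := ha k
    have hΓ := Real.Gamma_pos_of_pos hak
    have hΓp := Real.Gamma_pos_of_pos (show (0:ℝ) < α*k+β+δ by linarith)
    have hΓm := Real.Gamma_pos_of_pos (show (0:ℝ) < α*k+β-δ by linarith [haδ k])
    have hfac : (0:ℝ) < (k.factorial : ℝ) := by positivity
    have hck : |c k| = (k:ℝ) * |lam|^k / ((k.factorial : ℝ) * Real.Gamma (α*k+β)) := by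
      rw [hc]
      rw [abs_div, abs_mul, abs_mul, abs_pow, Nat.abs_cast, Nat.abs_cast, abs_of_pos hΓ]
    have hA1 : ∫ t in Set.Ioi (0:ℝ), ‖c k * base k t‖
        = |c k| * ∫ t in Set.Ioi (0:ℝ), ‖base k t‖ := by
      rw [← integral_const_mul]
      refine setIntegral_congr_fun measurableSet_Ioi fun t _ => ?_
      rw [norm_mul, Real.norm_eq_abs]
    have hA2 := integral_norm_term_le (a := α*k+β) hs hδ0 (haδ k)
    have hA3 : Real.Gamma (α*k+β+δ) + Real.Gamma (α*k+β-δ)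
        ≤ Real.Gamma (α*k+β) * (1+(α*k+β)) * (1 + 2/β) := by
      have g1 := Gamma_add_le hak hδ0.le (by linarith : δ ≤ 1)
      have g2 := Gamma_sub_le hδ0 (by linarith : δ ≤ 1) (haδ k)
      have g3 : Real.Gamma (α*k+β) * (1+(α*k+β)) / (α*k+β-δ)
          ≤ Real.Gamma (α*k+β) * (1+(α*k+β)) * (2/β) := by
        rw [div_le_iff₀ (by linarith [haδ k] : (0:ℝ) < α*k+β-δ)]
        have hnum : 0 ≤ Real.Gamma (α*k+β) * (1+(α*k+β)) := by positivity
        have hge : β/2 ≤ α*k+β-δ := by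
          have h0 : (0:ℝ) ≤ α * k := by positivity
          linarith
        calc Real.Gamma (α*k+β) * (1+(α*k+β))
            = Real.Gamma (α*k+β) * (1+(α*k+β)) * (2/β) * (β/2) := by
              field_simp
          _ ≤ Real.Gamma (α*k+β) * (1+(α*k+β)) * (2/β) * (α*k+β-δ) := by
              have : 0 ≤ Real.Gamma (α*k+β) * (1+(α*k+β)) * (2/β) := by positivity
              exact mul_le_mul_of_nonneg_left hge this
      have : (1:ℝ) ≤ 1 + 2/β := by
        have : (0:ℝ) < 2/β := by positivity
        linarith
      nlinarith [g1, g2.trans g3, Real.Gamma_pos_of_pos hak,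
        mul_nonneg (Real.Gamma_pos_of_pos hak).le (by positivity : (0:ℝ) ≤ 1+(α*k+β))]
    have hT0 : 0 ≤ (1/δ) * (s^(-δ) + s^δ + 1) * s^(-(α*k+β)) := by positivity
    have hmain : |c k| * ((1/δ) * (s^(-δ) + s^δ + 1) * s^(-(α*k+β))
          * (Real.Gamma (α*k+β) * (1+(α*k+β)) * (1 + 2/β)))
        = C * ((k:ℝ) * q^k / k.factorial * (1+(α*k+β))) := by
      rw [hck, hsa k, hC, hq, mul_pow]
      have hδ' : δ ≠ 0 := ne_of_gt hδ0
      have hΓ' : Real.Gamma (α*k+β) ≠ 0 := hΓ.ne'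
      have hfac' : (k.factorial : ℝ) ≠ 0 := hfac.ne'
      field_simp
    have h5 : (1+(α*k+β)) ≤ (1+β+α)*((k:ℝ)+1) := by
      have h0 : (0:ℝ) ≤ (k:ℝ) := Nat.cast_nonneg k
      nlinarith
    calc ∫ t in Set.Ioi (0:ℝ), ‖c k * base k t‖
        = |c k| * ∫ t in Set.Ioi (0:ℝ), ‖base k t‖ := hA1
      _ ≤ |c k| * ((1/δ) * (s^(-δ) + s^δ + 1) * s^(-(α*k+β))
            * (Real.Gamma (α*k+β+δ) + Real.Gamma (α*k+β-δ))) :=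
          mul_le_mul_of_nonneg_left hA2 (abs_nonneg _)
      _ ≤ |c k| * ((1/δ) * (s^(-δ) + s^δ + 1) * s^(-(α*k+β))
            * (Real.Gamma (α*k+β) * (1+(α*k+β)) * (1 + 2/β))) := by
          refine mul_le_mul_of_nonneg_left ?_ (abs_nonneg _)
          exact mul_le_mul_of_nonneg_left hA3 hT0
      _ = C * ((k:ℝ) * q^k / k.factorial * (1+(α*k+β))) := hmain
      _ ≤ C * ((k:ℝ) * q^k / k.factorial * ((1+β+α)*((k:ℝ)+1))) := by
          refine mul_le_mul_of_nonneg_left ?_ hC0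
          exact mul_le_mul_of_nonneg_left h5 (by positivity)
      _ = K * ((k:ℝ)*((k:ℝ)+1)* q^k / k.factorial) := by rw [hK]; ring
  have hsummable : Summable (fun k : ℕ => ∫ t in Set.Ioi (0:ℝ), ‖c k * base k t‖) :=
    Summable.of_nonneg_of_le (fun k => integral_nonneg fun t => norm_nonneg _) hbound
      ((summable_sq hq0).mul_left K)
  have hswap := MeasureTheory.integral_tsum_of_summable_integral_norm
    (F := fun (k : ℕ) (t : ℝ) => c k * base k t) (μ := volume.restrict (Set.Ioi 0))
    hIk hsummable
  calc (∫ t in Set.Ioi (0 : ℝ), Real.exp (-(s * t)) *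
        ∑' k : ℕ, (k : ℝ) * lam ^ k * t ^ (α * k + β - 1) *
          (Real.log t - digamma (α * k + β)) / (k.factorial * Real.Gamma (α * k + β)))
      = ∫ t in Set.Ioi (0:ℝ), ∑' k : ℕ, c k * base k t := by
        refine setIntegral_congr_fun measurableSet_Ioi fun t _ => ?_
        rw [← tsum_mul_left]
        exact tsum_congr fun k => by rw [hbase, hc]; ring
    _ = ∑' k : ℕ, ∫ t in Set.Ioi (0:ℝ), c k * base k t := hswap.symm
    _ = ∑' k : ℕ, (-(Real.log s) * s^(-β)) * ((k:ℝ) * (lam * s^(-α))^k / k.factorial) := by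
        refine tsum_congr fun k => ?_
        rw [integral_const_mul, hbase]
        simp only []
        rw [integral_term hs (ha k), hc, hsa k]
        have hΓ := (Real.Gamma_pos_of_pos (ha k)).ne'
        have hfac : ((k.factorial : ℝ)) ≠ 0 := by positivity
        rw [mul_pow]
        field_simp
    _ = (-(Real.log s) * s^(-β)) * ∑' k : ℕ, (k:ℝ) * (lam * s^(-α))^k / k.factorial :=
        tsum_mul_left
    _ = -(lam * Real.log s * s ^ (-(α + β)) * Real.exp (lam * s ^ (-α))) := by
        rw [tsum_mul_pow_div_factorial]
        have : s^(-(α+β)) = s^(-α) * s^(-β) := by rw [← Real.rpow_add hs]; ring_nf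
        rw [this]
        ring
end
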